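/- arXiv:1405.3124 — 10 statements merged into one kernel-verified Lean document; each statement's English description precedes it below -/
import Mathlib

section
/- Suppose b ≠ 0, b'' ≠ 0, a'·b = a·b', a''·b = a·b'', b''·c = b·c'', and the sequences (x_n), (y_n) of real numbers satisfy x_{n+1} = a·x_n + b·y_n + c and y_{n+1} = (a'·x_n + b'·y_n + c')/(a''·x_n + b''·y_n + c'') for all n ≥ 0, with a''·x_n + b''·y_n + c'' ≠ 0 for all n. Then for all n ≥ 0 one has x_{n+1} ≠ 0 and x_{n+2} = a·x_{n+1} + q + s/x_{n+1}, where q = c + b·b'/b'' and s = b·D'_{cb}/b''. -/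
/-- Under the degeneracy conditions `a'·b = a·b'`, `a''·b = a·b''`, `b''·c = b·c''`,
the folding of the planar rational system reduces to the first-order recursion
`x_{n+2} = a·x_{n+1} + q + s/x_{n+1}` with `q = c + b·b'/b''` and
`s = b·D'_{cb}/b'' = b·(b·c' − b'·c)/b''`. -/
theorem stmt_1 (a b c a' b' c' a'' b'' c'' : ℝ) (hb : b ≠ 0) (hb'' : b'' ≠ 0)
    (h1 : a' * b = a * b') (h2 : a'' * b = a * b'') (h3 : b'' * c = b * c'')
    (x y : ℕ → ℝ)
    (hx : ∀ n : ℕ, x (n + 1) = a * x n + b * y n + c)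
    (hy : ∀ n : ℕ, y (n + 1) =
      (a' * x n + b' * y n + c') / (a'' * x n + b'' * y n + c''))
    (hd : ∀ n : ℕ, a'' * x n + b'' * y n + c'' ≠ 0) :
    ∀ n : ℕ,
      x (n + 1) ≠ 0 ∧
      x (n + 2) =
        a * x (n + 1) + (c + b * b' / b'') +
          (b * (b * c' - b' * c) / b'') / x (n + 1) := by
  intro n
  have hd0 := hd n
  have key : b'' * x (n + 1) = b * (a'' * x n + b'' * y n + c'') := by
    rw [hx n]; linear_combination (-(x n)) * h2 + h3
  have keyN : b * (a' * x n + b' * y n + c') = b' * x (n + 1) + (b * c' - b' * c) := by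
    rw [hx n]; linear_combination (x n) * h1
  have hne : x (n + 1) ≠ 0 := by
    intro h
    apply hd0
    have : b * (a'' * x n + b'' * y n + c'') = 0 := by rw [← key, h, mul_zero]
    exact (mul_eq_zero.1 this).resolve_left hb
  refine ⟨hne, ?_⟩
  have hD : a'' * x n + b'' * y n + c'' = b'' * x (n + 1) / b := by
    field_simp; linear_combination -key
  have hN : a' * x n + b' * y n + c' = (b' * x (n + 1) + (b * c' - b' * c)) / b := by
    field_simp; linear_combination keyN
  rw [hx (n + 1), hy n, hD, hN]
  field_simp
  ring
end

section
/- Let q be a real number with −2 < q < 0, and let (r_n) satisfy r_{n+1} = r_n + q + 1/r_n for all n ≥ 0 with r_0 > 0. Then r_n > 0 for all n ≥ 0, and the sequence (r_n) is bounded: there exists M > 0 such that r_n ≤ M for all n. -/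
/-- For `−2 < q < 0`, every solution of `r_{n+1} = r_n + q + 1/r_n` with
`r_0 > 0` is positive and bounded. -/
theorem stmt_3 (q : ℝ) (hq1 : -2 < q) (hq2 : q < 0)
    (r : ℕ → ℝ) (hr : ∀ n : ℕ, r (n + 1) = r n + q + 1 / r n)
    (h0 : r 0 > 0) :
    (∀ n : ℕ, r n > 0) ∧ ∃ M : ℝ, M > 0 ∧ ∀ n : ℕ, r n ≤ M := by
  have h2q : (0:ℝ) < 2 + q := by linarith
  have key : ∀ x : ℝ, 0 < x → 2 ≤ x + 1 / x := by
    intro x hx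
    rw [← sub_nonneg]
    have h : x + 1 / x - 2 = (x - 1) ^ 2 / x := by field_simp; ring
    rw [h]
    positivity
  have hpos : ∀ n, 0 < r n := by
    intro n
    induction n with
    | zero => exact h0
    | succ k ih =>
      rw [hr k]
      have := key (r k) ih
      linarith
  have hge : ∀ n, 2 + q ≤ r (n + 1) := by
    intro n
    rw [hr n]
    have := key (r n) (hpos n)
    linarith
  refine ⟨hpos, ?_⟩
  set M : ℝ := max (max (r 0) (r 1)) (-1 / q + 1 / (2 + q)) with hM
  have hM0 : r 0 ≤ M := le_trans (le_max_left _ _) (le_max_left _ _)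
  have hM1 : r 1 ≤ M := le_trans (le_max_right _ _) (le_max_left _ _)
  have hMc : -1 / q + 1 / (2 + q) ≤ M := le_max_right _ _
  refine ⟨M, lt_of_lt_of_le h0 hM0, ?_⟩
  have hstep : ∀ n, r (n + 1) ≤ M := by
    intro n
    induction n with
    | zero => exact hM1
    | succ k ih =>
      rw [hr (k + 1)]
      have hk : 0 < r (k + 1) := hpos (k + 1)
      have hgek : 2 + q ≤ r (k + 1) := hge k
      by_cases hc : r (k + 1) ≤ -1 / q
      · have hinv : 1 / r (k + 1) ≤ 1 / (2 + q) :=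
          one_div_le_one_div_of_le h2q hgek
        have : r (k + 1) + q + 1 / r (k + 1) ≤ -1 / q + 1 / (2 + q) := by
          linarith
        linarith
      · push_neg at hc
        have hinv : 1 / r (k + 1) < -q := by
          rw [div_lt_iff₀ hk]
          have hq' : -1 / q = -(1 / q) := by ring
          rw [hq'] at hc
          have h1 : -q * -(1 / q) = 1 := by field_simp [hq2.ne, div_self hq2.ne]
          nlinarith [mul_lt_mul_of_pos_left hc (by linarith : (0:ℝ) < -q)]
        linarith
  intro n
  cases n with
  | zero => exact hM0
  | succ k => exact hstep k
end

section
/- Let q be a real number with −√(5/2) < q < −√2, and set t₁ = (−q − √(q² − 2))/2 and t₂ = (−q + √(q² − 2))/2. Then 0 < t₁ < t₂, f_q(t₁) = t₂ and f_q(t₂) = t₁ (so {t₁, t₂} is a cycle of minimal period 2 of the recursion r_{n+1} = r_n + q + 1/r_n), and this 2-cycle is asymptotically stable: |(1 − 1/t₁²)·(1 − 1/t₂²)| < 1, i.e. the derivative of f_q ∘ f_q at t₁ has absolute value strictly less than 1. -/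
/-- For `−√(5/2) < q < −√2`, the points `t₁ = (−q − √(q² − 2))/2` and
`t₂ = (−q + √(q² − 2))/2` form an asymptotically stable 2-cycle of
`f_q(r) = r + q + 1/r`: `0 < t₁ < t₂`, `f_q(t₁) = t₂`, `f_q(t₂) = t₁`, and the
derivative of `f_q ∘ f_q` at `t₁`, namely `(1 − 1/t₁²)·(1 − 1/t₂²)`, has
absolute value strictly less than 1. -/
theorem stmt_4 (q : ℝ) (hq1 : -Real.sqrt (5 / 2) < q) (hq2 : q < -Real.sqrt 2)
    (t₁ t₂ : ℝ)
    (ht₁ : t₁ = (-q - Real.sqrt (q ^ 2 - 2)) / 2)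
    (ht₂ : t₂ = (-q + Real.sqrt (q ^ 2 - 2)) / 2) :
    0 < t₁ ∧ t₁ < t₂ ∧
    t₁ + q + 1 / t₁ = t₂ ∧ t₂ + q + 1 / t₂ = t₁ ∧
    |(1 - 1 / t₁ ^ 2) * (1 - 1 / t₂ ^ 2)| < 1 := by
  have hq0 : -q > Real.sqrt 2 := by linarith
  have hs2pos : (0:ℝ) < Real.sqrt 2 := Real.sqrt_pos.mpr (by norm_num)
  have hqneg : q < 0 := by linarith
  have hq2' : 2 < q ^ 2 := by
    have := Real.sq_sqrt (by norm_num : (2:ℝ) ≥ 0)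
    nlinarith [sq_nonneg (-q - Real.sqrt 2)]
  have hq52 : q ^ 2 < 5 / 2 := by
    have h2 : -q < Real.sqrt (5/2) := by linarith
    have := Real.sq_sqrt (by norm_num : (5/2:ℝ) ≥ 0)
    nlinarith [Real.sqrt_nonneg (5/2 : ℝ)]
  set s := Real.sqrt (q ^ 2 - 2) with hs
  have hs0 : 0 ≤ s := Real.sqrt_nonneg _
  have hsq : s ^ 2 = q ^ 2 - 2 := Real.sq_sqrt (by linarith)
  have hspos : 0 < s := Real.sqrt_pos.mpr (by linarith)
  have hslt : s < -q := by
    nlinarith [sq_nonneg (s + q)]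
  have ht1pos : 0 < t₁ := by rw [ht₁]; linarith
  have ht2pos : 0 < t₂ := by rw [ht₂]; linarith
  have h12 : t₁ < t₂ := by rw [ht₁, ht₂]; linarith
  have ht1ne : t₁ ≠ 0 := ne_of_gt ht1pos
  have ht2ne : t₂ ≠ 0 := ne_of_gt ht2pos
  have hprod : t₁ * t₂ = 1 / 2 := by
    rw [ht₁, ht₂]; nlinarith [hsq]
  have hsum : t₁ + t₂ = -q := by rw [ht₁, ht₂]; ring
  refine ⟨ht1pos, h12, ?_, ?_, ?_⟩
  · have hinv : 1 / t₁ = 2 * t₂ := by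
      rw [div_eq_iff ht1ne]; linear_combination (-2 : ℝ) * hprod
    rw [hinv]; linarith
  · have hinv : 1 / t₂ = 2 * t₁ := by
      rw [div_eq_iff ht2ne]; linear_combination (-2 : ℝ) * hprod
    rw [hinv]; linarith
  · have hsq2 : t₁ ^ 2 + t₂ ^ 2 = q ^ 2 - 1 := by
      linear_combination (t₁ + t₂ - q) * hsum - 2 * hprod
    have key : (1 - 1 / t₁ ^ 2) * (1 - 1 / t₂ ^ 2) = 9 - 4 * q ^ 2 := by
      field_simp
      linear_combination (4 * q ^ 2 - 8) * (t₁ * t₂ + 1 / 2) * hprod - hsq2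
    rw [key, abs_lt]
    constructor <;> nlinarith
end

section
/- Let q = −√3 and set r₀ = (2/√3)·(1 + cos(π/9)), r₁ = r₀ − √3 + 1/r₀, r₂ = r₁ − √3 + 1/r₁. Then r₀, r₁, r₂ are positive, f_q(r₂) = r₀, and r₀, r₁, r₂ are pairwise distinct; that is, {r₀, r₁, r₂} is a cycle of minimal period 3 of the recursion r_{n+1} = r_n − √3 + 1/r_n. -/
/-- For `q = −√3`, the points `r₀ = (2/√3)(1 + cos(π/9))`, `r₁ = f_q(r₀)`,
`r₂ = f_q(r₁)` are positive, satisfy `f_q(r₂) = r₀`, and are pairwise distinct: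
a cycle of minimal period 3 of `r_{n+1} = r_n − √3 + 1/r_n`. -/
theorem stmt_5 (r₀ r₁ r₂ : ℝ)
    (h₀ : r₀ = 2 / Real.sqrt 3 * (1 + Real.cos (Real.pi / 9)))
    (h₁ : r₁ = r₀ - Real.sqrt 3 + 1 / r₀)
    (h₂ : r₂ = r₁ - Real.sqrt 3 + 1 / r₁) :
    0 < r₀ ∧ 0 < r₁ ∧ 0 < r₂ ∧
    r₂ - Real.sqrt 3 + 1 / r₂ = r₀ ∧
    r₀ ≠ r₁ ∧ r₀ ≠ r₂ ∧ r₁ ≠ r₂ := by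
  set s := Real.sqrt 3 with hsdef
  set c := Real.cos (Real.pi / 9) with hcdef
  have hs : 0 < s := Real.sqrt_pos.mpr (by norm_num)
  have hs2 : s ^ 2 = 3 := Real.sq_sqrt (by norm_num)
  have hc3 : 4 * c ^ 3 - 3 * c = 1 / 2 := by
    have h := Real.cos_three_mul (Real.pi / 9)
    rw [show 3 * (Real.pi / 9) = Real.pi / 3 by ring, Real.cos_pi_div_three] at h
    rw [hcdef]; linarith
  have hch : 1 / 2 < c := by
    rw [hcdef, show (1/2:ℝ) = Real.cos (Real.pi / 3) from Real.cos_pi_div_three.symm]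
    apply Real.cos_lt_cos_of_nonneg_of_le_pi
    · positivity
    · linarith [Real.pi_pos]
    · linarith [Real.pi_pos]
  have hc0 : (0:ℝ) < 1 + c := by linarith
  have hA : (0:ℝ) < 4 * c ^ 2 + 2 * c + 1 := by nlinarith
  have hr0 : r₀ = 2 * (1 + c) / s := by rw [h₀]; ring
  have hr0pos : 0 < r₀ := by rw [hr0]; positivity
  have hr1 : r₁ = (4 * c ^ 2 + 2 * c + 1) / (2 * s * (1 + c)) := by
    rw [h₁, hr0]
    field_simp
    linear_combination (-(2*c+1)) * hs2
  have hr1pos : 0 < r₁ := by rw [hr1]; positivity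
  have hr2 : r₂ = s / (4 * c ^ 2 + 2 * c + 1) := by
    rw [h₂, hr1]
    field_simp
    linear_combination (-8*c^2-8*c^3) * hs2 + (4*c-2) * hc3
  have hr2pos : 0 < r₂ := by rw [hr2]; positivity
  refine ⟨hr0pos, hr1pos, hr2pos, ?_, ?_, ?_, ?_⟩
  · rw [hr2, hr0]
    field_simp
    linear_combination (-2*c-4*c^2) * hs2 + (4*c+2) * hc3
  · rw [hr0, hr1]
    intro h
    rw [div_eq_div_iff (by positivity) (by positivity)] at h
    nlinarith [sq_nonneg c, sq_nonneg (c - 1)]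
  · rw [hr0, hr2]
    intro h
    rw [div_eq_div_iff (by positivity) (by positivity)] at h
    nlinarith [sq_nonneg c, sq_nonneg (c - 1)]
  · rw [hr1, hr2]
    intro h
    rw [div_eq_div_iff (by positivity) (by positivity)] at h
    nlinarith [sq_nonneg c, sq_nonneg (c - 1)]
end

section
/- Let q be a real number with −2 < q ≤ −√3. Then the recursion r_{n+1} = r_n + q + 1/r_n has cycles of all possible periods: for every positive integer p there exists r₀ > 0 such that the orbit of r₀ under f_q stays in (0, ∞) and is periodic with minimal period exactly p. -/
open Set

lemma pb_aux {f : ℝ → ℝ} {p r s t : ℝ} (hpr : p ≤ r) (hst : s ≤ t)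
    (hf : ContinuousOn f (Icc p r)) (hfp : f p = s) (hfr : f r = t) :
    ∃ u' v', p ≤ u' ∧ u' ≤ v' ∧ v' ≤ r ∧ (∀ x ∈ Icc u' v', f x ∈ Icc s t) ∧
      f u' = s ∧ f v' = t := by
  -- least point of [p,r] mapping to t
  have hTc : IsClosed (Icc p r ∩ f ⁻¹' {t}) :=
    hf.preimage_isClosed_of_isClosed isClosed_Icc isClosed_singleton
  have hTcomp : IsCompact (Icc p r ∩ f ⁻¹' {t}) :=
    isCompact_Icc.of_isClosed_subset hTc inter_subset_left
  obtain ⟨v', hv'⟩ := hTcomp.exists_isLeast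
    ⟨r, ⟨right_mem_Icc.2 hpr, by simp [hfr]⟩⟩
  obtain ⟨⟨hv'mem, hfv'⟩, hv'lb⟩ := hv'
  have hfv' : f v' = t := hfv'
  have hpv' : p ≤ v' := hv'mem.1
  have hv'r : v' ≤ r := hv'mem.2
  -- greatest point of [p,v'] mapping to s
  have hf2 : ContinuousOn f (Icc p v') := hf.mono (Icc_subset_Icc le_rfl hv'r)
  have hSc : IsClosed (Icc p v' ∩ f ⁻¹' {s}) :=
    hf2.preimage_isClosed_of_isClosed isClosed_Icc isClosed_singleton
  have hScomp : IsCompact (Icc p v' ∩ f ⁻¹' {s}) :=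
    isCompact_Icc.of_isClosed_subset hSc inter_subset_left
  obtain ⟨u', hu'⟩ := hScomp.exists_isGreatest
    ⟨p, ⟨left_mem_Icc.2 hpv', by simp [hfp]⟩⟩
  obtain ⟨⟨hu'mem, hfu'⟩, hu'ub⟩ := hu'
  have hfu' : f u' = s := hfu'
  have hpu' : p ≤ u' := hu'mem.1
  have hu'v' : u' ≤ v' := hu'mem.2
  refine ⟨u', v', hpu', hu'v', hv'r, ?_, hfu', hfv'⟩
  rintro x ⟨hxl, hxr⟩
  constructor
  · -- s ≤ f x
    by_contra hlt
    push_neg at hlt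
    have hmem : s ∈ Icc (f x) (f v') := ⟨hlt.le, by rw [hfv']; exact hst⟩
    have hsub : Icc x v' ⊆ Icc p v' := Icc_subset_Icc (le_trans hpu' hxl) le_rfl
    obtain ⟨y, hy, hfy⟩ := intermediate_value_Icc hxr (hf2.mono hsub) hmem
    have hyS : y ∈ Icc p v' ∩ f ⁻¹' {s} := ⟨hsub hy, by simp [hfy]⟩
    have : y ≤ u' := hu'ub hyS
    have hxu' : x = u' := le_antisymm (le_trans hy.1 this) hxl
    rw [hxu', hfu'] at hlt
    exact lt_irrefl s hlt
  · -- f x ≤ t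
    by_contra hlt
    push_neg at hlt
    have hmem : t ∈ Icc (f u') (f x) := ⟨by rw [hfu']; exact hst, hlt.le⟩
    have hxv : x ≤ v' := hxr
    have hsub : Icc u' x ⊆ Icc p r :=
      Icc_subset_Icc hpu' (le_trans hxv hv'r)
    obtain ⟨y, hy, hfy⟩ := intermediate_value_Icc hxl (hf.mono hsub) hmem
    have hyT : y ∈ Icc p r ∩ f ⁻¹' {t} := ⟨hsub hy, by simp [hfy]⟩
    have hv'y : v' ≤ y := hv'lb hyT
    have hyx : y = v' := le_antisymm (le_trans hy.2 hxv) hv'y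
    have : x = v' := le_antisymm hxv (hyx ▸ hy.2)
    rw [this, hfv'] at hlt
    exact lt_irrefl t hlt

lemma pb {f : ℝ → ℝ} {u v s t : ℝ} (hst : s ≤ t)
    (hf : ContinuousOn f (Icc u v))
    (hs : ∃ x ∈ Icc u v, f x = s) (ht : ∃ x ∈ Icc u v, f x = t) :
    ∃ u' v', u' ≤ v' ∧ Icc u' v' ⊆ Icc u v ∧ (∀ x ∈ Icc u' v', f x ∈ Icc s t) ∧
      ((f u' = s ∧ f v' = t) ∨ (f u' = t ∧ f v' = s)) := by
  obtain ⟨xs, hxs, hfxs⟩ := hs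
  obtain ⟨xt, hxt, hfxt⟩ := ht
  rcases le_total xs xt with h | h
  · obtain ⟨u', v', h1, h2, h3, h4, h5, h6⟩ :=
      pb_aux h hst (hf.mono (Icc_subset_Icc hxs.1 hxt.2)) hfxs hfxt
    exact ⟨u', v', h2, fun x hx => ⟨le_trans hxs.1 (le_trans h1 hx.1),
      le_trans hx.2 (le_trans h3 hxt.2)⟩, h4, Or.inl ⟨h5, h6⟩⟩
  · -- xt ≤ xs : mirror through negation
    have hsub0 : Icc xt xs ⊆ Icc u v := Icc_subset_Icc hxt.1 hxs.2
    have hmaps : MapsTo (fun y : ℝ => -y) (Icc (-xs) (-xt)) (Icc xt xs) := by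
      rintro y ⟨h1, h2⟩
      simp only [mem_Icc]
      constructor <;> linarith
    have hgc : ContinuousOn (fun y : ℝ => f (-y)) (Icc (-xs) (-xt)) :=
      (hf.mono hsub0).comp continuous_neg.continuousOn hmaps
    obtain ⟨u'', v'', h1, h2, h3, h4, h5, h6⟩ :=
      pb_aux (neg_le_neg h) hst hgc (by simpa using hfxs) (by simpa using hfxt)
    refine ⟨-v'', -u'', by linarith, ?_, ?_, Or.inr ⟨h6, h5⟩⟩
    · rintro x ⟨hx1, hx2⟩
      constructor
      · have : xt ≤ -v'' := by linarith
        exact le_trans hxt.1 (le_trans this hx1)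
      · have : -u'' ≤ xs := by linarith
        exact le_trans hx2 (le_trans this hxs.2)
    · rintro x ⟨hx1, hx2⟩
      have : -x ∈ Icc u'' v'' := ⟨by linarith, by linarith⟩
      simpa using h4 (-x) this

lemma iter_cont {f : ℝ → ℝ} {K : Set ℝ} (hf : ContinuousOn f K) :
    ∀ (m : ℕ) (S : Set ℝ), (∀ x ∈ S, ∀ j, j < m → f^[j] x ∈ K) →
      ContinuousOn (f^[m]) S := by
  intro m
  induction m with
  | zero => intro S _; simpa using continuousOn_id
  | succ n ih =>
    intro S hS
    rw [Function.iterate_succ']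
    refine ContinuousOn.comp hf (ih S fun x hx j hj => hS x hx j (by omega)) ?_
    intro x hx
    exact hS x hx n (by omega)

lemma chain_lemma {f : ℝ → ℝ} {a b c : ℝ} (hab : a < b) (hbc : b < c)
    (hf : ContinuousOn f (Icc a c))
    (covU : ∀ y ∈ Icc a c, ∃ x ∈ Icc a b, f x = y) :
    ∀ k : ℕ, 1 ≤ k → ∃ u v, u ≤ v ∧ Icc u v ⊆ Icc a b ∧
      (∀ x ∈ Icc u v, ∀ j, j < k → f^[j] x ∈ Icc a b) ∧
      (∀ x ∈ Icc u v, f^[k] x ∈ Icc b c) ∧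
      ((f^[k] u = b ∧ f^[k] v = c) ∨ (f^[k] u = c ∧ f^[k] v = b)) := by
  have hsubUC : Icc a b ⊆ Icc a c := Icc_subset_Icc le_rfl hbc.le
  have hfU : ContinuousOn f (Icc a b) := hf.mono hsubUC
  intro k hk
  induction k with
  | zero => omega
  | succ n ih =>
    rcases Nat.eq_or_lt_of_le hk with h1 | h1
    · -- n + 1 = 1, base case
      obtain rfl : n = 0 := by omega
      obtain ⟨u', v', h2, h3, h4, h5⟩ :=
        pb hbc.le hfU (covU b ⟨hab.le, hbc.le⟩) (covU c ⟨(hab.trans hbc).le, le_rfl⟩)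
      refine ⟨u', v', h2, h3, ?_, ?_, ?_⟩
      · intro x hx j hj
        obtain rfl : j = 0 := by omega
        simpa using h3 hx
      · intro x hx; simpa using h4 x hx
      · simpa using h5
    · -- step
      obtain ⟨u, v, huv, hsub, hitin, hmap, hend⟩ := ih (by omega)
      have huU : u ∈ Icc a c := hsubUC (hsub ⟨le_rfl, huv⟩)
      have hvU : v ∈ Icc a c := hsubUC (hsub ⟨huv, le_rfl⟩)
      obtain ⟨u', v', h2, h3, h4, h5⟩ := pb huv hfU (covU u huU) (covU v hvU)
      refine ⟨u', v', h2, h3, ?_, ?_, ?_⟩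
      · intro x hx j hj
        match j with
        | 0 => simpa using h3 hx
        | Nat.succ j' =>
          rw [Function.iterate_succ_apply]
          exact hitin (f x) (h4 x hx) j' (by omega)
      · intro x hx
        rw [Function.iterate_succ_apply]
        exact hmap (f x) (h4 x hx)
      · rw [Function.iterate_succ_apply, Function.iterate_succ_apply]
        rcases h5 with ⟨e1, e2⟩ | ⟨e1, e2⟩ <;> rw [e1, e2] <;> tauto

lemma periodic_orbit {f : ℝ → ℝ} {a b c : ℝ} (hab : a < b) (hbc : b < c)
    (hf : ContinuousOn f (Icc a c))
    (covU : ∀ y ∈ Icc a c, ∃ x ∈ Icc a b, f x = y)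
    (covV : ∀ y ∈ Icc a b, ∃ x ∈ Icc b c, f x = y)
    (p : ℕ) (hp : 2 ≤ p) :
    ∃ x ∈ Icc b c, f^[p] x = x ∧ (∀ j, 1 ≤ j → j ≤ p - 1 → f^[j] x ∈ Icc a b) := by
  have hsubUC : Icc a b ⊆ Icc a c := Icc_subset_Icc le_rfl hbc.le
  have hsubVC : Icc b c ⊆ Icc a c := Icc_subset_Icc hab.le le_rfl
  obtain ⟨u, v, huv, hsub, hitin, hmap, hend⟩ :=
    chain_lemma hab hbc hf covU (p - 1) (by omega)
  have huU : u ∈ Icc a b := hsub ⟨le_rfl, huv⟩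
  have hvU : v ∈ Icc a b := hsub ⟨huv, le_rfl⟩
  obtain ⟨u0, v0, h2, h3, h4, h5⟩ := pb huv (hf.mono hsubVC) (covV u huU) (covV v hvU)
  -- iterate identity: f^[p] x = f^[p-1] (f x)
  have hpsucc : p = (p - 1) + 1 := by omega
  have hiter : ∀ x : ℝ, f^[p] x = f^[p-1] (f x) := by
    intro x
    conv_lhs => rw [hpsucc]
    rw [Function.iterate_succ_apply]
  -- continuity of f^[p] on Icc u0 v0
  have hallK : ∀ x ∈ Icc u0 v0, ∀ j, j < p → f^[j] x ∈ Icc a c := by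
    intro x hx j hj
    match j with
    | 0 => exact hsubVC (h3 hx)
    | Nat.succ j' =>
      rw [Function.iterate_succ_apply]
      exact hsubUC (hitin (f x) (h4 x hx) j' (by omega))
  have hcont : ContinuousOn (f^[p]) (Icc u0 v0) := iter_cont hf p _ hallK
  -- endpoints of f^[p] on u0 v0 are {b, c}
  have hu0bc : u0 ∈ Icc b c := h3 ⟨le_rfl, h2⟩
  have hv0bc : v0 ∈ Icc b c := h3 ⟨h2, le_rfl⟩
  have hkey : (f^[p] u0 = b ∧ f^[p] v0 = c) ∨ (f^[p] u0 = c ∧ f^[p] v0 = b) := by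
    rw [hiter, hiter]
    rcases h5 with ⟨e1, e2⟩ | ⟨e1, e2⟩ <;> rw [e1, e2] <;> tauto
  have hfix : ∃ x ∈ Icc u0 v0, f^[p] x = x := by
    have hgc : ContinuousOn (fun x => f^[p] x - x) (Icc u0 v0) :=
      hcont.sub continuousOn_id
    rcases hkey with ⟨e1, e2⟩ | ⟨e1, e2⟩
    · have hm : (0:ℝ) ∈ Icc (f^[p] u0 - u0) (f^[p] v0 - v0) := by
        rw [e1, e2]
        constructor
        · simp; linarith [hu0bc.1]
        · simp; linarith [hv0bc.2]
      obtain ⟨x, hx, hfx⟩ := intermediate_value_Icc h2 hgc hm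
      exact ⟨x, hx, by linarith [sub_eq_zero.mp hfx]⟩
    · have hm : (0:ℝ) ∈ Icc (f^[p] v0 - v0) (f^[p] u0 - u0) := by
        rw [e1, e2]
        constructor
        · simp; linarith [hv0bc.1]
        · simp; linarith [hu0bc.2]
      obtain ⟨x, hx, hfx⟩ := intermediate_value_Icc' h2 hgc hm
      exact ⟨x, hx, by linarith [sub_eq_zero.mp hfx]⟩
  obtain ⟨x, hx, hfx⟩ := hfix
  refine ⟨x, h3 hx, hfx, ?_⟩
  intro j hj1 hj2
  match j with
  | Nat.succ j' =>
    rw [Function.iterate_succ_apply]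
    exact hitin (f x) (h4 x hx) j' (by omega)

set_option maxHeartbeats 2000000 in
/-- For `−2 < q ≤ −√3`, the recursion `r_{n+1} = r_n + q + 1/r_n` has cycles of
all possible periods: for every positive integer `p` there is a positive
solution that is periodic with minimal period exactly `p`. -/
theorem stmt_6 (q : ℝ) (hq1 : -2 < q) (hq2 : q ≤ -Real.sqrt 3) :
    ∀ p : ℕ, 0 < p → ∃ r : ℕ → ℝ,
      r 0 > 0 ∧
      (∀ n : ℕ, r n > 0) ∧
      (∀ n : ℕ, r (n + 1) = r n + q + 1 / r n) ∧
      (∀ n : ℕ, r (n + p) = r n) ∧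
      (∀ m : ℕ, 0 < m → (∀ n : ℕ, r (n + m) = r n) → p ≤ m) := by
  intro p hp
  have h3pos : (0:ℝ) < Real.sqrt 3 := Real.sqrt_pos.2 (by norm_num)
  have hq0 : q < 0 := by linarith
  rcases Nat.lt_or_ge p 2 with hp2 | hp2
  · -- p = 1 : use the fixed point -1/q
    obtain rfl : p = 1 := by omega
    have hq0' : q ≠ 0 := ne_of_lt hq0
    have hfix : -1/q + q + 1/(-1/q) = -1/q := by
      field_simp
      ring
    refine ⟨fun _ => -1/q, ?_, fun _ => ?_, fun _ => ?_, fun _ => rfl, fun m hm _ => hm⟩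
    · have : 1/q < 0 := one_div_neg.2 hq0
      simp only [neg_div]; linarith
    · have : 1/q < 0 := one_div_neg.2 hq0
      simp only [neg_div]; linarith
    · exact hfix.symm
  · -- p ≥ 2
    have hs3 : Real.sqrt 3 ≤ -q := by linarith
    have hq3 : 3 ≤ q^2 := by
      nlinarith [Real.sqrt_nonneg 3, Real.mul_self_sqrt (show (0:ℝ) ≤ 3 by norm_num), hs3]
    have hq173 : q ≤ -173/100 := by
      by_contra hcon
      push_neg at hcon
      nlinarith [mul_pos (show (0:ℝ) < q + 173/100 by linarith) (show (0:ℝ) < -q by linarith)]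
    set d : ℝ := Real.sqrt (q^2 - 3) with hddef
    have hd0 : 0 ≤ d := Real.sqrt_nonneg _
    have hd2 : d^2 = q^2 - 3 := Real.sq_sqrt (by linarith)
    have hd1 : d < 1 := by
      have h4 : q^2 < 4 := by nlinarith [mul_pos (show (0:ℝ) < 2 + q by linarith) (show (0:ℝ) < -q by linarith)]
      nlinarith [hd0, hd2, h4]
    set g : ℝ → ℝ := fun x => x^3 + (2*q-d)*x^2 + (q^2-q*d)*x + (q-d)/3 with hgdef
    have hgc : Continuous g := by
      rw [hgdef]; continuity
    -- sign values of g
    have hg0 : g 0 < 0 := by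
      show (0:ℝ)^3 + (2*q-d)*(0:ℝ)^2 + (q^2-q*d)*(0:ℝ) + (q-d)/3 < 0
      nlinarith [hd0, hq0]
    have hghalf : 0 < g (1/2) := by
      show 0 < (1/2:ℝ)^3 + (2*q-d)*(1/2:ℝ)^2 + (q^2-q*d)*(1/2:ℝ) + (q-d)/3
      have P1 : 0 < (q + 3/2)*(q + 1/6) :=
        mul_pos_of_neg_of_neg (by linarith) (by linarith)
      have P2 : 0 ≤ (-(7/12) - q/2)*d := mul_nonneg (by linarith) hd0
      have e : (1/2:ℝ)^3 + (2*q-d)*(1/2:ℝ)^2 + (q^2-q*d)*(1/2:ℝ) + (q-d)/3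
          = (1/2)*((q + 3/2)*(q + 1/6)) + (-(7/12) - q/2)*d := by ring
      linarith [e.ge, e.le]
    have hg09 : 0 < g (9/10) := by
      show 0 < (9/10:ℝ)^3 + (2*q-d)*(9/10:ℝ)^2 + (q^2-q*d)*(9/10:ℝ) + (q-d)/3
      have P1 : 0 ≤ (q + 173/100)^2 := sq_nonneg _
      have P2 : 0 ≤ (-(1741/1500))*(q + 173/100) := by
        have h : q + 173/100 ≤ 0 := by linarith
        linarith
      have P3 : 0 ≤ (-(343/300) - (9/10)*q)*d := mul_nonneg (by linarith) hd0
      have e : (9/10:ℝ)^3 + (2*q-d)*(9/10:ℝ)^2 + (q^2-q*d)*(9/10:ℝ) + (q-d)/3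
          = (9/10)*(q + 173/100)^2 + (-(1741/1500))*(q + 173/100) + 13003/300000
            + (-(343/300) - (9/10)*q)*d := by ring
      linarith [e.ge, e.le]
    have hg2 : g 2 < 0 := by
      show (2:ℝ)^3 + (2*q-d)*(2:ℝ)^2 + (q^2-q*d)*(2:ℝ) + (q-d)/3 < 0
      have P1 : (q + 3/2)*(q + 8/3) < 0 :=
        mul_neg_of_neg_of_pos (by linarith) (by linarith)
      have P2 : (-(13/3) - 2*q)*d ≤ 0 :=
        mul_nonpos_of_nonpos_of_nonneg (by linarith) hd0
      have e : (2:ℝ)^3 + (2*q-d)*(2:ℝ)^2 + (q^2-q*d)*(2:ℝ) + (q-d)/3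
          = 2*((q + 3/2)*(q + 8/3)) + (-(13/3) - 2*q)*d := by ring
      linarith [e.ge, e.le]
    have hg4 : 0 < g 4 := by
      show 0 < (4:ℝ)^3 + (2*q-d)*(4:ℝ)^2 + (q^2-q*d)*(4:ℝ) + (q-d)/3
      have P1 : 0 < (q + 11/4)*(q + 13/3) := mul_pos (by linarith) (by linarith)
      have P2 : 0 < (-(49/3) - 4*q)*(d - 1) :=
        mul_pos_of_neg_of_neg (by linarith) (by linarith)
      have e : (4:ℝ)^3 + (2*q-d)*(4:ℝ)^2 + (q^2-q*d)*(4:ℝ) + (q-d)/3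
          = 4*((q + 11/4)*(q + 13/3)) + (-(49/3) - 4*q)*(d - 1) + (-(49/3) - 4*q) + (49/3 + 4*q) := by ring
      linarith [e.ge, e.le]
    have hG5 : 0 < g ((d - q)/3) := by
      show 0 < ((d-q)/3)^3 + (2*q-d)*((d-q)/3)^2 + (q^2-q*d)*((d-q)/3) + (q-d)/3
      have hval : ((d-q)/3)^3 + (2*q-d)*((d-q)/3)^2 + (q^2-q*d)*((d-q)/3) + (q-d)/3
          = (q*(9-4*q^2) + d*(4*q^2-3))/27 := by
        linear_combination (-(2/27)*d) * hd2
      rw [hval]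
      have h1 : 0 < q*(9-4*q^2) := by
        have e : q*(9-4*q^2) = (-q)*(4*q^2-9) := by ring
        rw [e]
        exact mul_pos (by linarith) (by linarith)
      have h2 : 0 ≤ d*(4*q^2-3) := mul_nonneg hd0 (by linarith)
      positivity
    -- roots a < b < c via IVT
    obtain ⟨a, haI, hga⟩ := intermediate_value_Icc (show (0:ℝ) ≤ 1/2 by norm_num)
      hgc.continuousOn ⟨hg0.le, hghalf.le⟩
    obtain ⟨b, hbI, hgb⟩ := intermediate_value_Icc' (show (9/10:ℝ) ≤ 2 by norm_num)
      hgc.continuousOn ⟨hg2.le, hg09.le⟩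
    obtain ⟨c, hcI, hgc0⟩ := intermediate_value_Icc (show (2:ℝ) ≤ 4 by norm_num)
      hgc.continuousOn ⟨hg2.le, hg4.le⟩
    have ha0 : 0 < a := haI.1.lt_of_ne (by rintro rfl; rw [hga] at hg0; exact lt_irrefl 0 hg0)
    have ha12 : a < 1/2 := haI.2.lt_of_ne (by rintro h; rw [h] at hga; rw [hga] at hghalf; exact lt_irrefl 0 hghalf)
    have hb09 : 9/10 < b := hbI.1.lt_of_ne (by
      rintro h; rw [← h] at hgb; rw [hgb] at hg09; exact lt_irrefl 0 hg09)
    have hb2 : b < 2 := hbI.2.lt_of_ne (by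
      rintro h; rw [h] at hgb; rw [hgb] at hg2; exact lt_irrefl 0 hg2)
    have hc2 : 2 < c := hcI.1.lt_of_ne (by
      rintro h; rw [← h] at hgc0; rw [hgc0] at hg2; exact lt_irrefl 0 hg2)
    have hc4 : c < 4 := hcI.2.lt_of_ne (by
      rintro h; rw [h] at hgc0; rw [hgc0] at hg4; exact lt_irrefl 0 hg4)
    have hab : a < b := by linarith
    have hbc : b < c := by linarith
    have hb0 : (0:ℝ) < b := by linarith
    have hc0 : (0:ℝ) < c := by linarith
    -- cubic equations for the roots
    have hCa : a^3 + (2*q-d)*a^2 + (q^2-q*d)*a + (q-d)/3 = 0 := hga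
    have hCb : b^3 + (2*q-d)*b^2 + (q^2-q*d)*b + (q-d)/3 = 0 := hgb
    have hCc : c^3 + (2*q-d)*c^2 + (q^2-q*d)*c + (q-d)/3 = 0 := hgc0
    have hG5' : 0 < ((d-q)/3)^3 + (2*q-d)*((d-q)/3)^2 + (q^2-q*d)*((d-q)/3) + (q-d)/3 := hG5
    -- symmetric functions
    have hQab : a^2 + a*b + b^2 + (2*q-d)*(a+b) + (q^2-q*d) = 0 := by
      have h1 : (a - b) * (a^2 + a*b + b^2 + (2*q-d)*(a+b) + (q^2-q*d)) = 0 := by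
        linear_combination hCa - hCb
      rcases mul_eq_zero.mp h1 with h | h
      · exact absurd h (sub_ne_zero.2 (ne_of_lt hab))
      · exact h
    have hQbc : b^2 + b*c + c^2 + (2*q-d)*(b+c) + (q^2-q*d) = 0 := by
      have h1 : (b - c) * (b^2 + b*c + c^2 + (2*q-d)*(b+c) + (q^2-q*d)) = 0 := by
        linear_combination hCb - hCc
      rcases mul_eq_zero.mp h1 with h | h
      · exact absurd h (sub_ne_zero.2 (ne_of_lt hbc))
      · exact h
    have hsum : a + b + c = d - 2*q := by
      have h1 : (a - c) * (a + b + c + (2*q - d)) = 0 := by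
        linear_combination hQab - hQbc
      rcases mul_eq_zero.mp h1 with h | h
      · exact absurd h (sub_ne_zero.2 (by linarith))
      · linarith [h]
    have hs2 : a*b + b*c + c*a = q^2 - q*d := by
      linear_combination (-1:ℝ)*hQab + (a+b)*hsum
    have habc : a*b*c = (d - q)/3 := by
      linear_combination hCa - a^2*hsum + a*hs2
    have hfac : ∀ x : ℝ, x^3 + (2*q-d)*x^2 + (q^2-q*d)*x + (q-d)/3
        = (x-a)*(x-b)*(x-c) := by
      intro x
      linear_combination x^2*hsum - x*hs2 + habc
    -- the map F
    set F : ℝ → ℝ := fun t => t + q + 1/t with hFdef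
    have hroot : ∀ x : ℝ, 0 < x → x^3 + (2*q-d)*x^2 + (q^2-q*d)*x + (q-d)/3 = 0 →
        (F x - a) * (F x - b) * (F x - c) = 0 := by
      intro x hx hCx
      have hx0 : x ≠ 0 := ne_of_gt hx
      have hy : x * F x = x^2 + q*x + 1 := by
        show x * (x + q + 1/x) = x^2 + q*x + 1
        field_simp
      have key : x^3 * ((F x)^3 + (2*q-d)*(F x)^2 + (q^2-q*d)*(F x) + (q-d)/3) = 0 := by
        linear_combination ((x*F x)^2 + (x*F x)*(x^2+q*x+1) + (x^2+q*x+1)^2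
            + (2*q-d)*x*(x*F x + (x^2+q*x+1)) + (q^2-q*d)*x^2) * hy
          + (x^3 + 3*x^2*q + x*q^2 + x*q*d + 3*x - q^3 + q*d^2 + 4*q + d) * hCx
          + (-x^2*q^2 + x^2*q*d + x^2 - x*q^3 + x*q^2*d + (4/3)*x*q - q^2/3 + q*d/3 + 1/3) * hd2
      have key2 : (F x)^3 + (2*q-d)*(F x)^2 + (q^2-q*d)*(F x) + (q-d)/3 = 0 := by
        rcases mul_eq_zero.mp key with h | h
        · exact absurd h (pow_ne_zero 3 hx0)
        · exact h
      rw [← hfac (F x)]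
      exact key2
    -- F c = b
    have hFc : F c = b := by
      have h0 := hroot c hc0 hCc
      have hinvc : 1/c < 1/2 := by
        rw [div_lt_div_iff₀ hc0 (by norm_num : (0:ℝ) < 2)]; linarith
      have hne_c : F c ≠ c := by
        have : F c < c := by show c + q + 1/c < c; linarith
        exact ne_of_lt this
      have hne_a : F c ≠ a := by
        have h2 : 5/2 ≤ c + 1/c := by
          have e : c + 1/c - 5/2 = (c-2)*(c-1/2)/c := by field_simp; ring
          have h3 : 0 ≤ (c-2)*(c-1/2)/c :=
            div_nonneg (mul_nonneg (by linarith) (by linarith)) (by linarith)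
          linarith
        have h4 : 1/2 < F c := by show 1/2 < c + q + 1/c; linarith
        intro h
        rw [h] at h4
        linarith
      rcases mul_eq_zero.mp h0 with h | h
      · rcases mul_eq_zero.mp h with h' | h'
        · exact absurd (sub_eq_zero.mp h') hne_a
        · exact sub_eq_zero.mp h'
      · exact absurd (sub_eq_zero.mp h) hne_c
    -- F b = a
    have hFb : F b = a := by
      have h0 := hroot b hb0 hCb
      have hinvb : 1/b < 10/9 := by
        rw [div_lt_div_iff₀ hb0 (by norm_num : (0:ℝ) < 9)]; linarith
      have hne_b : F b ≠ b := by
        have : F b < b := by show b + q + 1/b < b; linarith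
        exact ne_of_lt this
      have hne_c : F b ≠ c := by
        have hnum : (b-2)*(b-1/2) ≤ 0 :=
          mul_nonpos_of_nonpos_of_nonneg (by linarith) (by linarith)
        have e : b + 1/b - 5/2 = (b-2)*(b-1/2)/b := by field_simp; ring
        have h3 : (b-2)*(b-1/2)/b ≤ 0 := div_nonpos_iff.mpr (Or.inr ⟨hnum, hb0.le⟩)
        have h2 : b + 1/b ≤ 5/2 := by linarith
        have h4 : F b < 2 := by show b + q + 1/b < 2; linarith
        intro h
        rw [h] at h4
        linarith
      rcases mul_eq_zero.mp h0 with h | h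
      · rcases mul_eq_zero.mp h with h' | h'
        · exact sub_eq_zero.mp h'
        · exact absurd (sub_eq_zero.mp h') hne_b
      · exact absurd (sub_eq_zero.mp h) hne_c
    -- F a = c
    have hFa : F a = c := by
      have h0 := hroot a ha0 hCa
      have hinva : 2 < 1/a := by
        rw [lt_div_iff₀ ha0]; linarith
      have hne_a : F a ≠ a := by
        have : a < F a := by show a < a + q + 1/a; linarith
        exact (ne_of_lt this).symm
      have hne_b : F a ≠ b := by
        intro hFab
        have heq : F a = F c := by rw [hFab, hFc]
        have e1 : a*c*(F a - F c) = (a - c)*(a*c - 1) := by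
          show a*c*((a + q + 1/a) - (c + q + 1/c)) = (a - c)*(a*c - 1)
          field_simp
          ring
        rw [heq, sub_self, mul_zero] at e1
        have hac1 : a*c = 1 := by
          rcases mul_eq_zero.mp e1.symm with h | h
          · exact absurd h (sub_ne_zero.2 (by linarith))
          · linarith [sub_eq_zero.mp h]
        have hbval : b = (d - q)/3 := by
          linear_combination habc - b*hac1
        have hCb' := hCb
        rw [hbval] at hCb'
        linarith
      rcases mul_eq_zero.mp h0 with h | h
      · rcases mul_eq_zero.mp h with h' | h'
        · exact absurd (sub_eq_zero.mp h') hne_a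
        · exact absurd (sub_eq_zero.mp h') hne_b
      · exact sub_eq_zero.mp h
    -- continuity of F on [a, c]
    have hFcont : ContinuousOn F (Icc a c) := by
      rw [hFdef]
      apply ContinuousOn.add
      · exact (continuous_id.add continuous_const).continuousOn
      · exact ContinuousOn.div continuousOn_const continuousOn_id
          (fun x hx => ne_of_gt (lt_of_lt_of_le ha0 hx.1))
    -- covering properties
    have covU : ∀ y ∈ Icc a c, ∃ x ∈ Icc a b, F x = y := by
      intro y hy
      have hmem : y ∈ Icc (F b) (F a) := by rw [hFa, hFb]; exact hy
      obtain ⟨x, hx, hfx⟩ := intermediate_value_Icc' hab.le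
        (hFcont.mono (Icc_subset_Icc le_rfl hbc.le)) hmem
      exact ⟨x, hx, hfx⟩
    have covV : ∀ y ∈ Icc a b, ∃ x ∈ Icc b c, F x = y := by
      intro y hy
      have hmem : y ∈ Icc (F b) (F c) := by rw [hFb, hFc]; exact hy
      obtain ⟨x, hx, hfx⟩ := intermediate_value_Icc hbc.le
        (hFcont.mono (Icc_subset_Icc hab.le le_rfl)) hmem
      exact ⟨x, hx, hfx⟩
    -- get the periodic point
    obtain ⟨x, hxV, hxper, hxit⟩ := periodic_orbit hab hbc hFcont covU covV p hp2
    have hFpos : ∀ t : ℝ, 0 < t → 0 < F t := by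
      intro t ht
      have e : F t = ((t-1)^2 + (2+q)*t)/t := by
        show t + q + 1/t = ((t-1)^2 + (2+q)*t)/t
        field_simp
        ring
      rw [e]
      apply div_pos _ ht
      have h1 : 0 ≤ (t-1)^2 := sq_nonneg _
      have h2 : 0 < (2+q)*t := mul_pos (by linarith) ht
      linarith
    have hx0 : 0 < x := lt_of_lt_of_le hb0 hxV.1
    refine ⟨fun n => F^[n] x, ?_, ?_, ?_, ?_, ?_⟩
    · simpa using hx0
    · intro n
      induction n with
      | zero => simpa using hx0
      | succ k ih =>
        show 0 < F^[k+1] x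
        rw [Function.iterate_succ_apply']
        exact hFpos _ ih
    · intro n
      show F^[n+1] x = F^[n] x + q + 1 / F^[n] x
      rw [Function.iterate_succ_apply']
    · intro n
      show F^[n + p] x = F^[n] x
      rw [Function.iterate_add_apply, hxper]
    · intro m hm hmper
      by_contra hcon
      push_neg at hcon
      have hiter0 : F^[m] x = x := by
        have h := hmper 0
        simpa using h
      have hxU : F^[m] x ∈ Icc a b := hxit m hm (by omega)
      have hxb : x = b := le_antisymm (hiter0 ▸ hxU.2) hxV.1
      rcases Nat.lt_or_ge p 3 with hp3 | hp3
      · -- p = 2, m = 1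
        obtain rfl : p = 2 := by omega
        obtain rfl : m = 1 := by omega
        have h1 : F x = x := by simpa using hiter0
        rw [hxb, hFb] at h1
        linarith
      · -- p ≥ 3
        have h2 : F^[2] x ∈ Icc a b := hxit 2 (by omega) (by omega)
        have h3 : F^[2] x = c := by
          have e2 : F^[2] x = F (F x) := by
            rw [show (2:ℕ) = 1 + 1 from rfl, Function.iterate_add_apply]
            simp
          rw [e2, hxb, hFb, hFa]
        rw [h3] at h2
        linarith [h2.2]
end

section
/- Let q be a real number with −2 < q < −√3. Then the recursion r_{n+1} = r_n + q + 1/r_n is chaotic in the sense of Li and Yorke on (0, ∞): there exists an uncountable set S ⊆ (0, ∞) such that for every r₀ ∈ S the orbit (f_q^n(r₀)) stays in (0, ∞) and is bounded, and for all u, v ∈ S with u ≠ v, limsup_{n→∞} |f_q^n(u) − f_q^n(v)| > 0 and liminf_{n→∞} |f_q^n(u) − f_q^n(v)| = 0. -/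
open Set Filter

/-- A continuous map sending an interval onto a superset of `[c,d]` maps some
subinterval exactly onto `[c,d]` (monotone-preimage version). -/
lemma subIcc_aux {g : ℝ → ℝ} {α β c d : ℝ} (hab : α ≤ β)
    (hg : ContinuousOn g (Icc α β)) (hcd : c ≤ d) (hgα : g α = c) (hgβ : g β = d) :
    ∃ a' b', α ≤ a' ∧ a' ≤ b' ∧ b' ≤ β ∧ g '' Icc a' b' = Icc c d := by
  have hAcl : IsClosed {t | t ∈ Icc α β ∧ g t = c} := by
    have := hg.preimage_isClosed_of_isClosed isClosed_Icc (isClosed_singleton (x := c))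
    simpa [Set.inter_def, Set.preimage, Set.mem_singleton_iff] using this
  have hAcomp : IsCompact {t | t ∈ Icc α β ∧ g t = c} :=
    isCompact_Icc.of_isClosed_subset hAcl (fun t ht => ht.1)
  have hAne : ({t | t ∈ Icc α β ∧ g t = c} : Set ℝ).Nonempty :=
    ⟨α, ⟨left_mem_Icc.2 hab, hgα⟩⟩
  set a' := sSup {t | t ∈ Icc α β ∧ g t = c} with ha'
  have ha'mem : a' ∈ {t | t ∈ Icc α β ∧ g t = c} := hAcomp.sSup_mem hAne
  have ha'le : ∀ t ∈ {t | t ∈ Icc α β ∧ g t = c}, t ≤ a' :=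
    fun t ht => le_csSup hAcomp.bddAbove ht
  -- B
  have ha'β : a' ≤ β := ha'mem.1.2
  have hBcl : IsClosed {t | t ∈ Icc a' β ∧ g t = d} := by
    have := (hg.mono (Icc_subset_Icc ha'mem.1.1 le_rfl)).preimage_isClosed_of_isClosed
      isClosed_Icc (isClosed_singleton (x := d))
    simpa [Set.inter_def, Set.preimage, Set.mem_singleton_iff] using this
  have hBcomp : IsCompact {t | t ∈ Icc a' β ∧ g t = d} :=
    isCompact_Icc.of_isClosed_subset hBcl (fun t ht => ht.1)
  have hBne : ({t | t ∈ Icc a' β ∧ g t = d} : Set ℝ).Nonempty :=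
    ⟨β, ⟨right_mem_Icc.2 ha'β, hgβ⟩⟩
  set b' := sInf {t | t ∈ Icc a' β ∧ g t = d} with hb'def
  have hb'mem : b' ∈ {t | t ∈ Icc a' β ∧ g t = d} := hBcomp.sInf_mem hBne
  have hb'le : ∀ t ∈ {t | t ∈ Icc a' β ∧ g t = d}, b' ≤ t :=
    fun t ht => csInf_le hBcomp.bddBelow ht
  have ha'b' : a' ≤ b' := hb'mem.1.1
  have hsub : Icc a' b' ⊆ Icc α β := Icc_subset_Icc ha'mem.1.1 hb'mem.1.2
  have hg' : ContinuousOn g (Icc a' b') := hg.mono hsub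
  refine ⟨a', b', ha'mem.1.1, ha'b', hb'mem.1.2, ?_⟩
  apply Subset.antisymm
  · rintro _ ⟨t, ht, rfl⟩
    constructor
    · by_contra hlt
      push_neg at hlt
      have htne : t ≠ a' := by rintro rfl; rw [ha'mem.2] at hlt; exact lt_irrefl _ hlt
      have hta : a' < t := lt_of_le_of_ne ht.1 (Ne.symm htne)
      have : c ∈ Icc (g t) (g b') := ⟨hlt.le, hb'mem.2 ▸ hcd⟩
      obtain ⟨s, hs, hgs⟩ := intermediate_value_Icc ht.2 (hg'.mono (Icc_subset_Icc ht.1 le_rfl)) this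
      have hsA : s ∈ {t | t ∈ Icc α β ∧ g t = c} :=
        ⟨⟨le_trans ha'mem.1.1 (le_trans hta.le hs.1), le_trans hs.2 hb'mem.1.2⟩, hgs⟩
      exact absurd (ha'le s hsA) (not_le.2 (lt_of_lt_of_le hta hs.1))
    · by_contra hlt
      push_neg at hlt
      have htne : t ≠ b' := by rintro rfl; rw [hb'mem.2] at hlt; exact lt_irrefl _ hlt
      have htb : t < b' := lt_of_le_of_ne ht.2 htne
      have : d ∈ Icc (g a') (g t) := ⟨ha'mem.2 ▸ hcd, hlt.le⟩
      obtain ⟨s, hs, hgs⟩ := intermediate_value_Icc ht.1 (hg'.mono (Icc_subset_Icc le_rfl ht.2)) this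
      have hsB : s ∈ {t | t ∈ Icc a' β ∧ g t = d} :=
        ⟨⟨hs.1, le_trans hs.2 (le_trans ht.2 hb'mem.1.2)⟩, hgs⟩
      exact absurd (hb'le s hsB) (not_le.2 (lt_of_le_of_lt hs.2 htb))
  · have h1 : Icc (g a') (g b') ⊆ g '' Icc a' b' := intermediate_value_Icc ha'b' hg'
    rw [ha'mem.2, hb'mem.2] at h1
    exact h1

lemma subIcc {g : ℝ → ℝ} {a b c d : ℝ} (hab : a ≤ b)
    (hg : ContinuousOn g (Icc a b)) (hcd : c ≤ d)
    (hc : ∃ t ∈ Icc a b, g t = c) (hd : ∃ t ∈ Icc a b, g t = d) :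
    ∃ a' b', a ≤ a' ∧ a' ≤ b' ∧ b' ≤ b ∧ g '' Icc a' b' = Icc c d := by
  obtain ⟨α, hα, hgα⟩ := hc
  obtain ⟨β, hβ, hgβ⟩ := hd
  rcases le_total α β with h | h
  · obtain ⟨a', b', h1, h2, h3, h4⟩ :=
      subIcc_aux h (hg.mono (Icc_subset_Icc hα.1 hβ.2)) hcd hgα hgβ
    exact ⟨a', b', le_trans hα.1 h1, h2, le_trans h3 hβ.2, h4⟩
  · -- reflect
    set g' : ℝ → ℝ := fun t => g (a + b - t) with hg'def
    have hcont : ContinuousOn g' (Icc (a + b - α) (a + b - β)) := by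
      apply ContinuousOn.comp hg (Continuous.continuousOn (by continuity))
      intro t ht
      constructor
      · have := ht.2; linarith [hβ.1]
      · have := ht.1; linarith [hα.2]
    have h1 : a + b - α ≤ a + b - β := by linarith
    obtain ⟨a'', b'', k1, k2, k3, k4⟩ := subIcc_aux h1 hcont hcd
      (by simp [hg'def, hgα]) (by simp [hg'def, hgβ])
    refine ⟨a + b - b'', a + b - a'', by linarith [hβ.1, k3, hα.1, hβ.2, hα.2, k1, k2], by linarith,
      by linarith [hα.2, k1], ?_⟩
    have himg : Icc (a + b - b'') (a + b - a'') = (fun t => a + b - t) '' Icc a'' b'' := by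
      rw [Set.image_const_sub_Icc]
    rw [himg, ← Set.image_comp]
    rw [← k4]
    rfl

/-- Realization of covering chains of compact intervals in `(0,∞)`. -/
lemma realize_chain {g : ℝ → ℝ} (hg : ContinuousOn g (Ioi (0:ℝ)))
    (lo hi : ℕ → ℝ) (hpos : ∀ n, 0 < lo n) (hle : ∀ n, lo n ≤ hi n)
    (hcov : ∀ n, Icc (lo (n+1)) (hi (n+1)) ⊆ g '' Icc (lo n) (hi n)) :
    ∃ u, ∀ n, g^[n] u ∈ Icc (lo n) (hi n) := by
  have hIoi : ∀ n, Icc (lo n) (hi n) ⊆ Ioi (0:ℝ) :=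
    fun n t ht => lt_of_lt_of_le (hpos n) ht.1
  have contIter : ∀ (n : ℕ) (s : Set ℝ), (∀ i, i < n → g^[i] '' s ⊆ Ioi 0) →
      ContinuousOn (g^[n]) s := by
    intro n
    induction n with
    | zero => intro s _; simpa using continuousOn_id
    | succ n ih =>
      intro s hs
      rw [Function.iterate_succ']
      exact ContinuousOn.comp hg (ih s (fun i hi' => hs i (Nat.lt_succ_of_lt hi')))
        (fun t ht => hs n (Nat.lt_succ_self n) (Set.mem_image_of_mem _ ht))
  -- good
  set good : ℕ → ℝ × ℝ → Prop := fun n ab =>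
    ab.1 ≤ ab.2 ∧ g^[n] '' Icc ab.1 ab.2 = Icc (lo n) (hi n) ∧
      ∀ i, i ≤ n → g^[i] '' Icc ab.1 ab.2 ⊆ Icc (lo i) (hi i) with hgood
  have base : good 0 (lo 0, hi 0) := by
    refine ⟨hle 0, by simp, ?_⟩
    intro i hi'
    interval_cases i
    simp
  have exists_next : ∀ n (ab : ℝ × ℝ), good n ab →
      ∃ ab' : ℝ × ℝ, good (n+1) ab' ∧ Icc ab'.1 ab'.2 ⊆ Icc ab.1 ab.2 := by
    rintro n ⟨an, bn⟩ ⟨h1, h2, h3⟩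
    have hcont : ContinuousOn (g^[n+1]) (Icc an bn) := by
      apply contIter
      intro i hi'
      exact fun t ht => hIoi i (h3 i (Nat.lt_succ_iff.1 hi') ht)
    have himg : g^[n+1] '' Icc an bn = g '' Icc (lo n) (hi n) := by
      rw [Function.iterate_succ', Set.image_comp, h2]
    have hsupset : Icc (lo (n+1)) (hi (n+1)) ⊆ g^[n+1] '' Icc an bn := by
      rw [himg]; exact hcov n
    have hcn : ∃ t ∈ Icc an bn, g^[n+1] t = lo (n+1) := by
      obtain ⟨t, ht, hgt⟩ := hsupset (left_mem_Icc.2 (hle (n+1)))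
      exact ⟨t, ht, hgt⟩
    have hdn : ∃ t ∈ Icc an bn, g^[n+1] t = hi (n+1) := by
      obtain ⟨t, ht, hgt⟩ := hsupset (right_mem_Icc.2 (hle (n+1)))
      exact ⟨t, ht, hgt⟩
    obtain ⟨a', b', k1, k2, k3, k4⟩ := subIcc h1 hcont (hle (n+1)) hcn hdn
    refine ⟨(a', b'), ⟨k2, k4, ?_⟩, Icc_subset_Icc k1 k3⟩
    intro i hi'
    rcases Nat.lt_succ_iff_lt_or_eq.1 (Nat.lt_succ_of_le hi') with h | h
    · exact subset_trans (Set.image_mono (Icc_subset_Icc k1 k3)) (h3 i (Nat.lt_succ_iff.1 h))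
    · rw [h, k4]
  -- build the nested sequence
  let seq : ∀ n : ℕ, {ab : ℝ × ℝ // good n ab} := fun n =>
    Nat.rec ⟨(lo 0, hi 0), base⟩
      (fun n prev => ⟨(exists_next n prev.1 prev.2).choose,
        (exists_next n prev.1 prev.2).choose_spec.1⟩) n
  have hnest : ∀ n, Icc (seq (n+1)).1.1 (seq (n+1)).1.2 ⊆ Icc (seq n).1.1 (seq n).1.2 :=
    fun n => (exists_next n (seq n).1 (seq n).2).choose_spec.2
  have hne : ∀ n, (Icc (seq n).1.1 (seq n).1.2).Nonempty :=
    fun n => nonempty_Icc.2 (seq n).2.1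
  have hinter : (⋂ n, Icc (seq n).1.1 (seq n).1.2).Nonempty :=
    IsCompact.nonempty_iInter_of_sequence_nonempty_isCompact_isClosed _
      hnest hne isCompact_Icc (fun _ => isClosed_Icc)
  obtain ⟨u, hu⟩ := hinter
  refine ⟨u, fun n => ?_⟩
  have h1 : u ∈ Icc (seq n).1.1 (seq n).1.2 := Set.mem_iInter.1 hu n
  have h2 := (seq n).2.2.1
  rw [← h2]
  exact Set.mem_image_of_mem _ h1

namespace LY
noncomputable def pp (q : ℝ) : ℝ := -1/q
noncomputable def xx (q : ℝ) : ℝ := -q - Real.sqrt (q^2 - 1)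
noncomputable def dlt : ℝ := 1/100
noncomputable def EE (q : ℝ) : ℝ := pp q - xx q + dlt
noncomputable def th (q : ℝ) : ℝ := pp q * (pp q + EE q)
noncomputable def ta (q : ℝ) : ℝ := th q / (1 - th q)

structure Facts (q : ℝ) : Prop where
  hq0   : q < 0
  hqp   : q * pp q = -1
  hp1   : 1/2 < pp q
  hp2   : 3 * pp q ^ 2 < 1
  hx1   : 1/4 < xx q
  hx2   : 3 * xx q < 1
  hrel  : pp q * (xx q ^ 2 + 1) = 2 * xx q
  hfx   : xx q + q + 1 / xx q = -q

variable {q : ℝ}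

lemma sqrt3_lt : (5:ℝ)/3 < Real.sqrt 3 := by
  have h := Real.sq_sqrt (by norm_num : (0:ℝ) ≤ 3)
  nlinarith [Real.sqrt_nonneg 3]

lemma facts {q : ℝ} (hq1 : -2 < q) (hq2 : q < -Real.sqrt 3) : Facts q := by
  have h3 : (5:ℝ)/3 < Real.sqrt 3 := sqrt3_lt
  have hq53 : q < -(5/3) := by linarith
  have hq0 : q < 0 := by linarith
  have hqne : q ≠ 0 := ne_of_lt hq0
  have hqp : q * pp q = -1 := by rw [pp]; field_simp
  have hq2' : q^2 > 3 := by
    have h4 : Real.sqrt 3 < -q := by linarith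
    nlinarith [Real.sq_sqrt (by norm_num : (0:ℝ) ≤ 3), Real.sqrt_nonneg 3]
  have hp1 : 1/2 < pp q := by
    rw [pp, lt_div_iff_of_neg hq0]; linarith
  have hp2 : 3 * pp q ^ 2 < 1 := by
    have hq2ne : (0:ℝ) < q^2 := by positivity
    rw [pp, show (-1/q)^2 = 1/q^2 by ring, mul_one_div, div_lt_one hq2ne]
    linarith
  have hs_nonneg : (0:ℝ) ≤ q^2 - 1 := by nlinarith
  have hsq : Real.sqrt (q^2-1) ^ 2 = q^2 - 1 := Real.sq_sqrt hs_nonneg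
  have hs0 : 0 ≤ Real.sqrt (q^2-1) := Real.sqrt_nonneg _
  have hx2 : 3 * xx q < 1 := by
    rw [xx]
    have h5 : -q - 1/3 < Real.sqrt (q^2-1) := by
      by_contra h
      push_neg at h
      have h6 : 0 ≤ -q - 1/3 := le_trans hs0 h
      nlinarith [hsq]
    linarith
  have hx1 : 1/4 < xx q := by
    rw [xx]
    have h5 : Real.sqrt (q^2-1) < -q - 1/4 := by
      by_contra h
      push_neg at h
      nlinarith [hsq, hs0]
    linarith
  have hxq : xx q ^2 + 2*q*xx q + 1 = 0 := by
    rw [xx]; nlinarith [hsq]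
  have hxpos : 0 < xx q := by linarith
  have hrel : pp q * (xx q ^ 2 + 1) = 2 * xx q := by
    have h2 : xx q ^2 + 1 = -2*q*xx q := by linarith
    rw [h2, pp]
    field_simp
  have hfx : xx q + q + 1 / xx q = -q := by
    have h2 : xx q * (xx q + q + 1 / xx q) = xx q * (-q) := by
      field_simp
      nlinarith [hxq]
    exact mul_left_cancel₀ (ne_of_gt hxpos) h2
  exact ⟨hq0, hqp, hp1, hp2, hx1, hx2, hrel, hfx⟩


lemma hp_lt (F : Facts q) : pp q < 3/5 := by nlinarith [F.hp2, F.hp1]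

lemma hx_lt_p (F : Facts q) : xx q < pp q := by
  have := F.hx2; have := F.hp1; linarith

lemma hE_pos (F : Facts q) : 0 < EE q := by
  have := hx_lt_p F; rw [EE, dlt]; linarith

lemma hdlt_lt_E (F : Facts q) : dlt < EE q := by
  have := hx_lt_p F; rw [EE]; linarith

lemma hpE (F : Facts q) : pp q - EE q = xx q - dlt := by rw [EE]; ring

lemma hE_lt_p (F : Facts q) : EE q < pp q := by
  have h := hpE F; have := F.hx1; rw [dlt] at *; linarith

/-- The key estimate `θ < 1/2`. -/
lemma hth_lt (F : Facts q) : th q < 1/2 := by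
  have h1 := F.hp1; have h2 := F.hp2; have h3 := F.hx1; have h4 := F.hx2
  have h5 := F.hrel
  rw [th, EE, dlt]
  nlinarith [sq_nonneg (pp q - xx q), sq_nonneg (pp q + xx q), sq_nonneg (xx q - 1/3),
    sq_nonneg (pp q - 1/2), mul_pos (by linarith : (0:ℝ) < pp q) (by linarith : (0:ℝ) < xx q)]

lemma hth_pos (F : Facts q) : 0 < th q := by
  have h1 := F.hp1; have h2 := hE_pos F; rw [th]; nlinarith

lemma hta_pos (F : Facts q) : 0 < ta q := by
  have h1 := hth_pos F; have h2 := hth_lt F; rw [ta]; exact div_pos h1 (by linarith)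

lemma hta_lt1 (F : Facts q) : ta q < 1 := by
  have h1 := hth_pos F; have h2 := hth_lt F
  rw [ta, div_lt_one (by linarith)]; linarith

noncomputable def ff (q : ℝ) (r : ℝ) : ℝ := r + q + 1/r

lemma key_side {w θ ε : ℝ} (hw1 : 0 < w) (hw2 : w ≤ θ) (hθ2 : θ < 1/2) (he : 0 < ε) :
    ε ≤ θ/(1-θ) * (ε * (1-w)/w) := by
  rw [div_mul_div_comm, le_div_iff₀ (by nlinarith)]
  nlinarith

lemma hq_eq (F : Facts q) : q = -(1 / pp q) := by
  have h := F.hqp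
  have hppos : 0 < pp q := by linarith [F.hp1]
  field_simp at h ⊢
  linarith

lemma hp_pos (F : Facts q) : 0 < pp q := by linarith [F.hp1]

lemma hpmE_pos (F : Facts q) : 0 < pp q - EE q := by
  rw [hpE F, dlt]; linarith [F.hx1]

lemma f_left (F : Facts q) {ε : ℝ} (h1 : 0 < ε) (h2 : ε ≤ EE q) :
    ε ≤ ta q * (ff q (pp q - ε) - pp q) := by
  have hppos := hp_pos F
  have hpme : 0 < pp q - ε := by linarith [hpmE_pos F]
  have hgen : ∀ P : ℝ, 0 < P → 0 < P - ε → P * (P - ε) ≤ th q →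
      ε ≤ ta q * ((P - ε) + (-(1/P)) + 1/(P-ε) - P) := by
    intro P hP hPe hw2
    have hw1 : 0 < P * (P - ε) := by positivity
    have hkey : (P - ε) + (-(1/P)) + 1/(P-ε) - P = ε * (1 - P*(P-ε)) / (P*(P-ε)) := by
      field_simp; ring
    rw [hkey, ta]
    exact key_side hw1 hw2 (hth_lt F) h1
  have H := hgen (pp q) hppos hpme (by rw [th]; nlinarith [hE_pos F, hp_pos F, h1])
  rw [← hq_eq F] at H
  rw [ff]
  linarith [H]

lemma f_right (F : Facts q) {ε : ℝ} (h1 : 0 < ε) (h2 : ε ≤ EE q) :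
    ε ≤ ta q * (pp q - ff q (pp q + ε)) := by
  have hppos := hp_pos F
  have hpe : 0 < pp q + ε := by linarith
  have hgen : ∀ P : ℝ, 0 < P → 0 < P + ε → P * (P + ε) ≤ th q →
      ε ≤ ta q * (P - ((P + ε) + (-(1/P)) + 1/(P+ε))) := by
    intro P hP hPe hw2
    have hw1 : 0 < P * (P + ε) := by positivity
    have hkey : P - ((P + ε) + (-(1/P)) + 1/(P+ε)) = ε * (1 - P*(P+ε)) / (P*(P+ε)) := by
      field_simp; ring
    rw [hkey, ta]
    exact key_side hw1 hw2 (hth_lt F) h1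
  have H := hgen (pp q) hppos hpe (by rw [th]; nlinarith [mul_le_mul_of_nonneg_left h2 (hp_pos F).le])
  rw [← hq_eq F] at H
  rw [ff]
  linarith [H]

lemma ff_contOn : ContinuousOn (ff q) (Ioi (0:ℝ)) := by
  have : ContinuousOn (fun r : ℝ => r + q + 1/r) (Ioi 0) := by
    apply (continuousOn_id.add continuousOn_const).add
    exact continuousOn_const.div continuousOn_id (fun r hr => ne_of_gt hr)
  exact this

lemma cancel_ta (F : Facts q) {a b : ℝ} (h : ta q * a ≤ ta q * b) : a ≤ b :=
  le_of_mul_le_mul_left h (hta_pos F)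

lemma cov_CC (F : Facts q) {ε ε' : ℝ} (he : 0 < ε) (heE : ε ≤ EE q)
    (he' : 0 < ε') (hta : ta q * ε' ≤ ε) :
    Icc (pp q - ε') (pp q + ε') ⊆ ff q '' Icc (pp q - ε) (pp q + ε) := by
  have h1 : ε' ≤ ff q (pp q - ε) - pp q := cancel_ta F (le_trans hta (f_left F he heE))
  have h2 : ε' ≤ pp q - ff q (pp q + ε) := cancel_ta F (le_trans hta (f_right F he heE))
  have hsub : Icc (pp q - ε) (pp q + ε) ⊆ Ioi (0:ℝ) := by
    intro t ht
    have := ht.1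
    have h3 : 0 < pp q - EE q := hpmE_pos F
    simp only [mem_Ioi]
    linarith
  have hIV := intermediate_value_Icc' (by linarith : pp q - ε ≤ pp q + ε)
    ((ff_contOn (q := q)).mono hsub)
  exact subset_trans (Icc_subset_Icc (by linarith) (by linarith)) hIV

lemma cov_FC (F : Facts q) {ε' : ℝ} (he' : 0 < ε') (hta : ta q * ε' ≤ dlt) :
    Icc (pp q - ε') (pp q + ε') ⊆ ff q '' Icc (1/(pp q + dlt)) (1/(pp q - dlt)) := by
  have hppos := hp_pos F
  have hd : (0:ℝ) < dlt := by rw [dlt]; norm_num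
  have hdE : dlt ≤ EE q := (hdlt_lt_E F).le
  have hpd : 0 < pp q - dlt := by rw [dlt]; linarith [F.hp1]
  have hrefl1 : ff q (1/(pp q + dlt)) = ff q (pp q + dlt) := by
    rw [ff, ff, one_div_one_div]; ring
  have hrefl2 : ff q (1/(pp q - dlt)) = ff q (pp q - dlt) := by
    rw [ff, ff, one_div_one_div]; ring
  have h1 : ε' ≤ ff q (pp q - dlt) - pp q := cancel_ta F (le_trans hta (f_left F hd hdE))
  have h2 : ε' ≤ pp q - ff q (pp q + dlt) := cancel_ta F (le_trans hta (f_right F hd hdE))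
  have hord : 1/(pp q + dlt) ≤ 1/(pp q - dlt) := by
    rw [div_le_div_iff₀ (by linarith) hpd]; linarith
  have hsub : Icc (1/(pp q + dlt)) (1/(pp q - dlt)) ⊆ Ioi (0:ℝ) := fun t ht => by
    simp only [mem_Ioi]
    have := ht.1
    have : 0 < 1/(pp q + dlt) := by positivity
    linarith [ht.1]
  have hIV := intermediate_value_Icc hord ((ff_contOn (q := q)).mono hsub)
  rw [hrefl1, hrefl2] at hIV
  exact subset_trans (Icc_subset_Icc (by linarith) (by linarith)) hIV

lemma ffx_plus (F : Facts q) : ff q (xx q + dlt) ≤ -q - 7*dlt := by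
  have hx1 := F.hx1; have hx2 := F.hx2
  have hd : (0:ℝ) < dlt := by rw [dlt]; norm_num
  have hxpos : 0 < xx q := by linarith
  have hw : 0 < xx q * (xx q + dlt) := by positivity
  have e : ff q (xx q + dlt) = (xx q + q + 1/xx q) + (dlt - dlt/(xx q*(xx q + dlt))) := by
    rw [ff]; field_simp; ring
  rw [e, F.hfx]
  have hww : 8 * (xx q * (xx q + dlt)) ≤ 1 := by rw [dlt]; nlinarith
  have : 8 * dlt ≤ dlt/(xx q*(xx q + dlt)) := by
    rw [le_div_iff₀ hw]; nlinarith
  linarith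

lemma ffx_minus (F : Facts q) : -q + 7*dlt ≤ ff q (xx q - dlt) := by
  have hx1 := F.hx1; have hx2 := F.hx2
  have hd : (0:ℝ) < dlt := by rw [dlt]; norm_num
  have hxd : 0 < xx q - dlt := by rw [dlt]; linarith
  have hw : 0 < xx q * (xx q - dlt) := by positivity
  have e : ff q (xx q - dlt) = (xx q + q + 1/xx q) + (dlt/(xx q*(xx q - dlt)) - dlt) := by
    rw [ff]; field_simp; ring
  rw [e, F.hfx]
  have hww : 8 * (xx q * (xx q - dlt)) ≤ 1 := by rw [dlt]; nlinarith
  have : 8 * dlt ≤ dlt/(xx q*(xx q - dlt)) := by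
    rw [le_div_iff₀ hw]; nlinarith
  linarith

lemma FF_up (F : Facts q) : 1/(pp q - dlt) ≤ -q + 7*dlt := by
  have hp1 := F.hp1; have hd : (0:ℝ) < dlt := by rw [dlt]; norm_num
  have hpd : 0 < pp q - dlt := by rw [dlt]; linarith
  have hq' : -q = 1/pp q := by have := hq_eq F; linarith
  rw [hq', div_le_iff₀ hpd]
  have hppos := hp_pos F
  rw [dlt] at *
  rw [div_add' _ _ _ (ne_of_gt hppos), div_mul_eq_mul_div, le_div_iff₀ hppos]
  nlinarith [hp_lt F]

lemma FF_down (F : Facts q) : -q - 7*dlt ≤ 1/(pp q + dlt) := by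
  have hp1 := F.hp1; have hd : (0:ℝ) < dlt := by rw [dlt]; norm_num
  have hpd : 0 < pp q + dlt := by linarith
  have hq' : -q = 1/pp q := by have := hq_eq F; linarith
  rw [hq', le_div_iff₀ hpd]
  have hppos := hp_pos F
  rw [dlt] at *
  rw [div_sub' (ne_of_gt hppos), div_mul_eq_mul_div, div_le_iff₀ hppos]
  nlinarith [hp_lt F]

lemma cov_XF (F : Facts q) :
    Icc (1/(pp q + dlt)) (1/(pp q - dlt)) ⊆ ff q '' Icc (xx q - dlt) (xx q + dlt) := by
  have hx1 := F.hx1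
  have hd : (0:ℝ) < dlt := by rw [dlt]; norm_num
  have hxd : 0 < xx q - dlt := by rw [dlt]; linarith
  have hsub : Icc (xx q - dlt) (xx q + dlt) ⊆ Ioi (0:ℝ) := fun t ht => by
    simp only [mem_Ioi]; linarith [ht.1]
  have hIV := intermediate_value_Icc' (by linarith : xx q - dlt ≤ xx q + dlt)
    ((ff_contOn (q := q)).mono hsub)
  refine subset_trans (Icc_subset_Icc ?_ ?_) hIV
  · exact le_trans (ffx_plus F) (by linarith [FF_down F])
  · exact le_trans (FF_up F) (by linarith [ffx_minus F])

lemma gap (F : Facts q) : pp q + EE q + 1/2 ≤ 1/(pp q + dlt) := by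
  have hp1 := F.hp1; have hp2 := hp_lt F; have hx1 := F.hx1
  have hpd : 0 < pp q + dlt := by rw [dlt]; linarith
  rw [le_div_iff₀ hpd, EE, dlt]
  nlinarith

lemma lo1 (F : Facts q) : (1/5 : ℝ) ≤ xx q - dlt := by
  have := F.hx1; rw [dlt]; linarith

lemma lo2 (F : Facts q) : (1/5 : ℝ) ≤ 1/(pp q + dlt) := by
  have hp2 := hp_lt F; have hp1 := F.hp1
  have hpd : 0 < pp q + dlt := by rw [dlt]; linarith
  rw [le_div_iff₀ hpd, dlt]; nlinarith

lemma hi2 (F : Facts q) : 1/(pp q - dlt) ≤ 3 := by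
  have hp1 := F.hp1
  have hpd : 0 < pp q - dlt := by rw [dlt]; linarith
  rw [div_le_iff₀ hpd, dlt]; nlinarith

lemma Eta_pos (F : Facts q) (t : ℕ) : 0 < EE q * ta q ^ t :=
  mul_pos (hE_pos F) (pow_pos (hta_pos F) t)

lemma Eta_le (F : Facts q) (t : ℕ) : EE q * ta q ^ t ≤ EE q :=
  mul_le_of_le_one_right (hE_pos F).le (pow_le_one₀ (hta_pos F).le (hta_lt1 F).le)

/-! ### The symbolic schedule -/

def stepState (J : ℕ) (s : ℕ × ℕ) : ℕ × ℕ :=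
  if s.2 < s.1+3+J then (s.1, s.2+1) else (s.1+1, 0)

def st (J : ℕ) : ℕ → ℕ × ℕ := fun n => Nat.rec (0,0) (fun _ s => stepState J s) n

def dep (J k pos : ℕ) : ℕ :=
  if pos ≤ k+1 then k+1-pos else if pos ≤ k+3 then 0 else J+k+3-pos

def idx (k : ℕ) : ℕ := (Nat.unpair k).1

noncomputable def lof (q : ℝ) (J : ℕ) (y : ℕ → Bool) (k pos : ℕ) : ℝ :=
  if y (idx k) = true ∧ pos = k+2 then xx q - dlt
  else if y (idx k) = true ∧ pos = k+3 then 1/(pp q + dlt)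
  else pp q - EE q * ta q ^ dep J k pos

noncomputable def hif (q : ℝ) (J : ℕ) (y : ℕ → Bool) (k pos : ℕ) : ℝ :=
  if y (idx k) = true ∧ pos = k+2 then xx q + dlt
  else if y (idx k) = true ∧ pos = k+3 then 1/(pp q - dlt)
  else pp q + EE q * ta q ^ dep J k pos

variable {J : ℕ} {y : ℕ → Bool}

lemma lof_C {k pos : ℕ} (h : ¬(y (idx k) = true) ∨ (pos ≠ k+2 ∧ pos ≠ k+3)) :
    lof q J y k pos = pp q - EE q * ta q ^ dep J k pos ∧
    hif q J y k pos = pp q + EE q * ta q ^ dep J k pos := by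
  constructor <;>
  · simp only [lof, hif]
    rw [if_neg (by tauto), if_neg (by tauto)]

lemma lof_X {k : ℕ} (hb : y (idx k) = true) :
    lof q J y k (k+2) = xx q - dlt ∧ hif q J y k (k+2) = xx q + dlt := by
  constructor <;> simp [lof, hif, hb]

lemma lof_F {k : ℕ} (hb : y (idx k) = true) :
    lof q J y k (k+3) = 1/(pp q + dlt) ∧ hif q J y k (k+3) = 1/(pp q - dlt) := by
  constructor <;> simp [lof, hif, hb]

lemma dep_step (J k pos : ℕ) : dep J k pos ≤ dep J k (pos+1) + 1 := by
  simp only [dep]; split_ifs <;> omega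

lemma covCC' (F : Facts q) {t t' : ℕ} (h : t ≤ t' + 1) :
    Icc (pp q - EE q * ta q ^ t') (pp q + EE q * ta q ^ t')
      ⊆ ff q '' Icc (pp q - EE q * ta q ^ t) (pp q + EE q * ta q ^ t) := by
  apply cov_CC F (Eta_pos F t) (Eta_le F t) (Eta_pos F t')
  have h1 : ta q * (EE q * ta q ^ t') = EE q * ta q ^ (t'+1) := by ring
  rw [h1]
  apply mul_le_mul_of_nonneg_left _ (hE_pos F).le
  exact pow_le_pow_of_le_one (hta_pos F).le (hta_lt1 F).le h

lemma cov_step (F : Facts q) (hJ1 : 1 ≤ J) (hJ2 : EE q * ta q ^ J ≤ dlt)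
    (k pos : ℕ) (hpos : pos ≤ k+3+J) :
    Icc (lof q J y (stepState J (k,pos)).1 (stepState J (k,pos)).2)
        (hif q J y (stepState J (k,pos)).1 (stepState J (k,pos)).2)
      ⊆ ff q '' Icc (lof q J y k pos) (hif q J y k pos) := by
  by_cases hlt : pos < k+3+J
  · have hstep : stepState J (k,pos) = (k, pos+1) := by simp [stepState, hlt]
    rw [hstep]
    by_cases hb : y (idx k) = true
    · by_cases h1 : pos = k+1
      · -- target is X
        subst h1
        rw [(lof_X hb).1, (lof_X hb).2, (lof_C (Or.inr ⟨by omega, by omega⟩)).1,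
          (lof_C (Or.inr ⟨by omega, by omega⟩)).2]
        have hdep : dep J k (k+1) = 0 := by simp [dep]
        rw [hdep]
        refine subset_trans (Icc_subset_Icc ?_ ?_) (covCC' F (t := 0) (t' := 0) (by omega))
        · rw [pow_zero, mul_one, hpE F]
        · rw [pow_zero, mul_one]
          have h5 := hx_lt_p F; have h6 := hpE F; rw [dlt] at h6; rw [dlt]; linarith
      · by_cases h2 : pos = k+2
        · subst h2
          rw [show k+2+1 = k+3 by omega, (lof_F hb).1, (lof_F hb).2,
            (lof_X hb).1, (lof_X hb).2]
          exact cov_XF F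
        · by_cases h3 : pos = k+3
          · subst h3
            rw [show k+3+1 = k+4 by omega, (lof_F hb).1, (lof_F hb).2,
              (lof_C (Or.inr ⟨by omega, by omega⟩)).1, (lof_C (Or.inr ⟨by omega, by omega⟩)).2]
            apply cov_FC F (Eta_pos F _)
            have hdep : dep J k (k+4) = J - 1 := by simp only [dep]; split_ifs <;> omega
            rw [hdep]
            have h4 : ta q * (EE q * ta q ^ (J-1)) = EE q * ta q ^ (J-1+1) := by ring
            rw [h4, show J - 1 + 1 = J by omega]
            exact hJ2
          · -- C to C
            rw [(lof_C (Or.inr ⟨by omega, by omega⟩)).1, (lof_C (Or.inr ⟨by omega, by omega⟩)).2,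
              (lof_C (Or.inr ⟨h2, h3⟩)).1, (lof_C (Or.inr ⟨h2, h3⟩)).2]
            exact covCC' F (dep_step J k pos)
    · rw [(lof_C (Or.inl hb)).1, (lof_C (Or.inl hb)).2,
        (lof_C (Or.inl hb)).1, (lof_C (Or.inl hb)).2]
      exact covCC' F (dep_step J k pos)
  · have heq : pos = k+3+J := by omega
    subst heq
    have hstep : stepState J (k, k+3+J) = (k+1, 0) := by simp [stepState]
    rw [hstep]
    rw [(lof_C (q := q) (J := J) (y := y) (k := k+1) (pos := 0) (Or.inr ⟨by omega, by omega⟩)).1,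
      (lof_C (q := q) (J := J) (y := y) (k := k+1) (pos := 0) (Or.inr ⟨by omega, by omega⟩)).2,
      (lof_C (Or.inr ⟨by omega, by omega⟩)).1, (lof_C (Or.inr ⟨by omega, by omega⟩)).2]
    have hdep : dep J k (k+3+J) = 0 := by simp only [dep]; split_ifs <;> omega
    rw [hdep]
    exact covCC' F (by omega)

lemma st_succ (J n : ℕ) : st J (n+1) = stepState J (st J n) := rfl

lemma st_inv (J : ℕ) : ∀ n, (st J n).2 ≤ (st J n).1 + 3 + J := by
  intro n
  induction n with
  | zero => simp [st]
  | succ n ih =>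
    rw [st_succ, stepState]
    split_ifs with h
    · simpa using h
    · simp

lemma st_adv (J n k : ℕ) (h : st J n = (k, 0)) :
    ∀ d, d ≤ k+3+J → st J (n+d) = (k, d) := by
  intro d
  induction d with
  | zero => simpa using h
  | succ d ih =>
    intro hd
    have h1 : st J (n+d) = (k, d) := ih (by omega)
    rw [show n + (d+1) = (n+d)+1 by omega, st_succ, h1, stepState]
    rw [if_pos (by simpa using by omega : (k,d).2 < (k,d).1+3+J)]

lemma st_reach (J : ℕ) : ∀ k, ∃ n, k ≤ n ∧ st J n = (k, 0) := by
  intro k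
  induction k with
  | zero => exact ⟨0, le_refl _, rfl⟩
  | succ k ih =>
    obtain ⟨n, hn, hst⟩ := ih
    refine ⟨n + (k+3+J) + 1, by omega, ?_⟩
    rw [st_succ, st_adv J n k hst (k+3+J) (le_refl _), stepState]
    rw [if_neg (by simp)]

lemma FF_ord (F : Facts q) : 1/(pp q + dlt) ≤ 1/(pp q - dlt) := by
  have hp1 := F.hp1
  have hd : (0:ℝ) < dlt := by rw [dlt]; norm_num
  have hpd : 0 < pp q - dlt := by rw [dlt]; linarith
  rw [div_le_div_iff₀ (by linarith) hpd]; linarith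

lemma lo_hi_bounds (F : Facts q) (J : ℕ) (y : ℕ → Bool) (k pos : ℕ) :
    (1/5 : ℝ) ≤ lof q J y k pos ∧ lof q J y k pos ≤ hif q J y k pos ∧ hif q J y k pos ≤ 3 := by
  have hd : (0:ℝ) < dlt := by rw [dlt]; norm_num
  have hx2 := F.hx2
  have hp2 := hp_lt F
  have hx1 := F.hx1
  have hE := Eta_pos F (dep J k pos)
  have hEle := Eta_le F (dep J k pos)
  have hpE' := hpE F
  simp only [lof, hif]
  split_ifs with h1 h2
  · exact ⟨lo1 F, by linarith, by rw [dlt]; linarith⟩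
  · exact ⟨lo2 F, FF_ord F, hi2 F⟩
  · refine ⟨?_, by linarith, ?_⟩
    · have := lo1 F; linarith
    · have hEp : EE q < pp q := hE_lt_p F
      linarith

lemma uncountable_bool_seqs : ¬ Countable (ℕ → Bool) := by
  intro hC
  classical
  have hg : Function.Injective (fun s : Set ℕ => (fun n => decide (n ∈ s) : ℕ → Bool)) := by
    intro s s' h
    ext n
    have h2 := congrFun h n
    simp only at h2
    exact (decide_eq_decide).1 h2
  have : Countable (Set ℕ) := hg.countable
  obtain ⟨h, hinj⟩ := exists_injective_nat (Set ℕ)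
  exact Function.cantor_injective h hinj

end LY



/-- For `−2 < q < −√3`, the map `f_q(r) = r + q + 1/r` is chaotic in the sense
of Li and Yorke on `(0, ∞)`: there is an uncountable set `S ⊆ (0, ∞)` of
initial points with positive bounded orbits such that for all distinct
`u, v ∈ S`, `limsup |f_q^n(u) − f_q^n(v)| > 0` and
`liminf |f_q^n(u) − f_q^n(v)| = 0`. -/
theorem stmt_7 (q : ℝ) (hq1 : -2 < q) (hq2 : q < -Real.sqrt 3) :
    ∃ S : Set ℝ, S ⊆ Set.Ioi (0 : ℝ) ∧ ¬ S.Countable ∧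
      (∀ r₀ ∈ S,
        (∀ n : ℕ, (fun r : ℝ => r + q + 1 / r)^[n] r₀ ∈ Set.Ioi (0 : ℝ)) ∧
        ∃ M : ℝ, ∀ n : ℕ, |(fun r : ℝ => r + q + 1 / r)^[n] r₀| ≤ M) ∧
      (∀ u ∈ S, ∀ v ∈ S, u ≠ v →
        0 < Filter.limsup
            (fun n : ℕ =>
              |(fun r : ℝ => r + q + 1 / r)^[n] u -
                (fun r : ℝ => r + q + 1 / r)^[n] v|) Filter.atTop ∧
        Filter.liminf
            (fun n : ℕ =>
              |(fun r : ℝ => r + q + 1 / r)^[n] u -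
                (fun r : ℝ => r + q + 1 / r)^[n] v|) Filter.atTop = 0) := by
  classical
  have F := LY.facts hq1 hq2
  have hfeq : (fun r : ℝ => r + q + 1 / r) = LY.ff q := rfl
  rw [hfeq]
  have hd : (0:ℝ) < LY.dlt := by rw [LY.dlt]; norm_num
  have hEpos := LY.hE_pos F
  have htapos := LY.hta_pos F
  have htalt := LY.hta_lt1 F
  obtain ⟨J0, hJ0⟩ := exists_pow_lt_of_lt_one
    (show (0:ℝ) < LY.dlt / LY.EE q from div_pos hd hEpos) htalt
  set J := J0 + 1 with hJdef
  have hJ1 : 1 ≤ J := by omega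
  have hJ2 : LY.EE q * LY.ta q ^ J ≤ LY.dlt := by
    have h1 : LY.ta q ^ J ≤ LY.ta q ^ J0 :=
      pow_le_pow_of_le_one htapos.le htalt.le (by omega)
    rw [lt_div_iff₀ hEpos] at hJ0
    nlinarith
  have horb : ∀ y : ℕ → Bool, ∃ u, ∀ n,
      (LY.ff q)^[n] u ∈ Set.Icc (LY.lof q J y (LY.st J n).1 (LY.st J n).2)
        (LY.hif q J y (LY.st J n).1 (LY.st J n).2) := by
    intro y
    apply realize_chain LY.ff_contOn
    · intro n; have := (LY.lo_hi_bounds F J y (LY.st J n).1 (LY.st J n).2).1; linarith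
    · intro n; exact (LY.lo_hi_bounds F J y (LY.st J n).1 (LY.st J n).2).2.1
    · intro n
      rw [LY.st_succ]
      have h := LY.cov_step (y := y) F hJ1 hJ2 (LY.st J n).1 (LY.st J n).2 (LY.st_inv J n)
      simpa using h
  choose U hU using horb
  have hmem : ∀ y n, (LY.ff q)^[n] (U y) ∈ Set.Icc (1/5 : ℝ) 3 := by
    intro y n
    have h := hU y n
    have hb := LY.lo_hi_bounds F J y (LY.st J n).1 (LY.st J n).2
    exact ⟨le_trans hb.1 h.1, le_trans h.2 hb.2.2⟩
  have hdata : ∀ (y y' : ℕ → Bool) (i : ℕ), y i = true → y' i = false → ∀ N : ℕ, ∃ n, N ≤ n ∧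
      1/2 ≤ (LY.ff q)^[n] (U y) - (LY.ff q)^[n] (U y') := by
    intro y y' i hy hy' N
    set k := Nat.pair i N with hkdef
    obtain ⟨n0, hn0, hst⟩ := LY.st_reach J k
    have hkN : N ≤ k := Nat.right_le_pair i N
    have hidx : LY.idx k = i := by rw [LY.idx, hkdef, Nat.unpair_pair]
    have hadv := LY.st_adv J n0 k hst (k+3) (by omega)
    refine ⟨n0 + (k+3), by omega, ?_⟩
    have h1 := hU y (n0 + (k+3)); rw [hadv] at h1
    have h2 := hU y' (n0 + (k+3)); rw [hadv] at h2
    have hby : y (LY.idx k) = true := by rw [hidx]; exact hy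
    have hby' : ¬ (y' (LY.idx k) = true) := by rw [hidx, hy']; simp
    rw [(LY.lof_F hby).1, (LY.lof_F hby).2] at h1
    rw [(LY.lof_C (Or.inl hby')).1, (LY.lof_C (Or.inl hby')).2] at h2
    have hgap := LY.gap F
    have hEta := LY.Eta_le F (LY.dep J k (k+3))
    linarith [h1.1, h2.2]
  have hsync : ∀ (y y' : ℕ → Bool) (k : ℕ), ∃ n, k ≤ n ∧
      |(LY.ff q)^[n] (U y) - (LY.ff q)^[n] (U y')|
        ≤ 2 * (LY.EE q * LY.ta q ^ (k+1)) := by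
    intro y y' k
    obtain ⟨n0, hn0, hst⟩ := LY.st_reach J k
    refine ⟨n0, hn0, ?_⟩
    have hdep : LY.dep J k 0 = k+1 := by simp [LY.dep]
    have hC : ∀ z : ℕ → Bool,
        LY.lof q J z k 0 = LY.pp q - LY.EE q * LY.ta q ^ (k+1) ∧
        LY.hif q J z k 0 = LY.pp q + LY.EE q * LY.ta q ^ (k+1) := by
      intro z
      have h := LY.lof_C (q := q) (J := J) (y := z) (k := k) (pos := 0)
        (Or.inr ⟨by omega, by omega⟩)
      rw [hdep] at h
      exact h
    have h1 := hU y n0; rw [hst, (hC y).1, (hC y).2] at h1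
    have h2 := hU y' n0; rw [hst, (hC y').1, (hC y').2] at h2
    rw [abs_le]
    constructor <;> linarith [h1.1, h1.2, h2.1, h2.2]
  refine ⟨Set.range U, ?_, ?_, ?_, ?_⟩
  · rintro _ ⟨y, rfl⟩
    have h := hmem y 0
    simp only [Function.iterate_zero, id] at h
    have : (0:ℝ) < 1/5 := by norm_num
    exact lt_of_lt_of_le this h.1
  · intro hC
    have hinj : Function.Injective U := by
      intro y y' hEq
      by_contra hne
      obtain ⟨i, hi⟩ : ∃ i, y i ≠ y' i := by
        by_contra h; push_neg at h; exact hne (funext h)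
      rcases Bool.eq_false_or_eq_true (y i) with hyi | hyi
      · have hy'i : y' i = false := by
          cases h' : y' i
          · rfl
          · rw [hyi, h'] at hi; exact absurd rfl hi
        obtain ⟨n, _, hsep⟩ := hdata y y' i hyi hy'i 0
        rw [hEq] at hsep
        linarith
      · have hy'i : y' i = true := by
          cases h' : y' i
          · rw [hyi, h'] at hi; exact absurd rfl hi
          · rfl
        obtain ⟨n, _, hsep⟩ := hdata y' y i hy'i hyi 0
        rw [hEq] at hsep
        linarith
    have hcnt : Countable (Set.range U) := hC.to_subtype
    have : Countable (ℕ → Bool) :=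
      Function.Injective.countable
        (f := fun y : ℕ → Bool => (⟨U y, Set.mem_range_self y⟩ : Set.range U))
        (fun a b h => hinj (congrArg Subtype.val h))
    exact LY.uncountable_bool_seqs this
  · rintro _ ⟨y, rfl⟩
    constructor
    · intro n
      have h := hmem y n
      have : (0:ℝ) < 1/5 := by norm_num
      exact lt_of_lt_of_le this h.1
    · refine ⟨3, fun n => ?_⟩
      have h := hmem y n
      rw [abs_le]
      constructor <;> linarith [h.1, h.2]
  · rintro _ ⟨y, rfl⟩ _ ⟨y', rfl⟩ hne
    obtain ⟨i, hi⟩ : ∃ i, y i ≠ y' i := by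
      by_contra h; push_neg at h; exact hne (congrArg U (funext h))
    have hbdd_le : Filter.IsBoundedUnder (· ≤ ·) Filter.atTop
        (fun n : ℕ => |(LY.ff q)^[n] (U y) - (LY.ff q)^[n] (U y')|) := by
      apply Filter.isBoundedUnder_of
      refine ⟨3, fun n => ?_⟩
      have h1 := hmem y n; have h2 := hmem y' n
      rw [abs_le]
      constructor <;> linarith [h1.1, h1.2, h2.1, h2.2]
    have hbdd_ge : Filter.IsBoundedUnder (· ≥ ·) Filter.atTop
        (fun n : ℕ => |(LY.ff q)^[n] (U y) - (LY.ff q)^[n] (U y')|) := by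
      apply Filter.isBoundedUnder_of
      exact ⟨0, fun n => abs_nonneg _⟩
    have hfreq_half : ∀ N : ℕ, ∃ n ≥ N,
        1/2 ≤ |(LY.ff q)^[n] (U y) - (LY.ff q)^[n] (U y')| := by
      intro N
      rcases Bool.eq_false_or_eq_true (y i) with hyi | hyi
      · have hy'i : y' i = false := by
          cases h' : y' i
          · rfl
          · rw [hyi, h'] at hi; exact absurd rfl hi
        obtain ⟨n, hn, hsep⟩ := hdata y y' i hyi hy'i N
        exact ⟨n, hn, le_trans hsep (le_abs_self _)⟩
      · have hy'i : y' i = true := by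
          cases h' : y' i
          · rw [hyi, h'] at hi; exact absurd rfl hi
          · rfl
        obtain ⟨n, hn, hsep⟩ := hdata y' y i hy'i hyi N
        refine ⟨n, hn, ?_⟩
        rw [abs_sub_comm]
        exact le_trans hsep (le_abs_self _)
    constructor
    · have h12 : (1/2 : ℝ) ≤ Filter.limsup
          (fun n : ℕ => |(LY.ff q)^[n] (U y) - (LY.ff q)^[n] (U y')|) Filter.atTop :=
        Filter.le_limsup_of_frequently_le (Filter.frequently_atTop.2 hfreq_half) hbdd_le
      linarith
    · apply le_antisymm
      · apply le_of_forall_gt_imp_ge_of_dense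
        intro c hc
        apply Filter.liminf_le_of_frequently_le _ hbdd_ge
        rw [Filter.frequently_atTop]
        intro N
        have htend : Filter.Tendsto (fun k : ℕ => 2 * LY.EE q * LY.ta q ^ k)
            Filter.atTop (nhds 0) := by
          have h0 := (tendsto_pow_atTop_nhds_zero_of_lt_one htapos.le htalt).const_mul
            (2 * LY.EE q)
          simpa using h0
        have hev : ∀ᶠ k : ℕ in Filter.atTop, 2 * LY.EE q * LY.ta q ^ k < c :=
          htend.eventually (gt_mem_nhds hc)
        obtain ⟨k, hk1, hk2⟩ := (hev.and (Filter.eventually_ge_atTop N)).exists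
        obtain ⟨n, hn, habs⟩ := hsync y y' k
        refine ⟨n, by omega, le_trans habs ?_⟩
        have hpow : LY.ta q ^ (k+1) ≤ LY.ta q ^ k :=
          pow_le_pow_of_le_one htapos.le htalt.le (by omega)
        nlinarith
      · exact Filter.le_liminf_of_le (hbdd_le.isCoboundedUnder_ge)
          (Filter.Eventually.of_forall fun n => abs_nonneg _)
end

section
/- Assume hypotheses (H): b ≠ 0, b'' ≠ 0, |a'| + |a''| > 0, |a''| + |b''| > 0, |a'| + |b'| + |c'| > 0, a = 1, a'·b = b', a''·b = b'', b''·c = b·c'', and b'' = b·(b·c' − b'·c); set q = c + b·b'/b''. If −2 < q < 0, then for every initial point (x₀, y₀) with x₀ + b·y₀ + c > 0 the orbit of the system is well-defined and bounded: there exist sequences (x_n), (y_n) starting at (x₀, y₀) satisfying x_{n+1} = x_n + b·y_n + c and y_{n+1} = (a'·x_n + b'·y_n + c')/(a''·x_n + b''·y_n + c'') with a''·x_n + b''·y_n + c'' ≠ 0 for all n, and there exists M > 0 such that |x_n| ≤ M and |y_n| ≤ M for all n. -/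
/-- Under hypotheses (H) with `−2 < q < 0`, every orbit of the system with
`x₀ + b·y₀ + c > 0` is well-defined and bounded. -/
theorem stmt_9 (a b c a' b' c' a'' b'' c'' q : ℝ)
    (hb : b ≠ 0) (hb'' : b'' ≠ 0)
    (hnt1 : |a'| + |a''| > 0) (hnt2 : |a''| + |b''| > 0)
    (hnt3 : |a'| + |b'| + |c'| > 0)
    (ha : a = 1) (h1 : a' * b = b') (h2 : a'' * b = b'') (h3 : b'' * c = b * c'')
    (h4 : b'' = b * (b * c' - b' * c))
    (hq : q = c + b * b' / b'') (hq1 : -2 < q) (hq2 : q < 0) :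
    ∀ x₀ y₀ : ℝ, x₀ + b * y₀ + c > 0 →
      ∃ x y : ℕ → ℝ,
        x 0 = x₀ ∧ y 0 = y₀ ∧
        (∀ n : ℕ, a'' * x n + b'' * y n + c'' ≠ 0) ∧
        (∀ n : ℕ, x (n + 1) = x n + b * y n + c) ∧
        (∀ n : ℕ, y (n + 1) =
          (a' * x n + b' * y n + c') / (a'' * x n + b'' * y n + c'')) ∧
        ∃ M : ℝ, M > 0 ∧ ∀ n : ℕ, |x n| ≤ M ∧ |y n| ≤ M := by
  intro x₀ y₀ h₀
  -- the iteration map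
  set f : ℝ × ℝ → ℝ × ℝ := fun p =>
    (p.1 + b * p.2 + c,
      (a' * p.1 + b' * p.2 + c') / (a'' * p.1 + b'' * p.2 + c'')) with hf
  set x : ℕ → ℝ := fun n => (f^[n] (x₀, y₀)).1 with hx
  set y : ℕ → ℝ := fun n => (f^[n] (x₀, y₀)).2 with hy
  set t : ℕ → ℝ := fun n => x n + b * y n + c with ht
  -- bounds for t
  set m : ℝ := min (x₀ + b * y₀ + c) (2 + q) with hmdef
  set B : ℝ := max (x₀ + b * y₀ + c) (-1 / q + 1 / m) with hBdef
  have hm : 0 < m := lt_min h₀ (by linarith)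
  have hB : 0 < B := lt_of_lt_of_le h₀ (le_max_left _ _)
  have hqne : q ≠ 0 := ne_of_lt hq2
  -- algebraic identities
  have hden : ∀ X Y : ℝ, a'' * X + b'' * Y + c'' = (b'' / b) * (X + b * Y + c) := by
    intro X Y
    field_simp
    linear_combination X * h2 - h3
  have hnum : ∀ X Y : ℝ, a' * X + b' * Y + c' =
      (b' / b) * (X + b * Y + c) + b'' / b ^ 2 := by
    intro X Y
    field_simp
    linear_combination b * X * h1 - h4
  have hyval : ∀ X Y : ℝ, X + b * Y + c ≠ 0 →
      (a' * X + b' * Y + c') / (a'' * X + b'' * Y + c'') =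
        b' / b'' + 1 / (b * (X + b * Y + c)) := by
    intro X Y hT
    rw [hden X Y, hnum X Y]
    field_simp
  -- step formulas
  have hxstep : ∀ n : ℕ, x (n + 1) = x n + b * y n + c := by
    intro n
    simp only [hx, hy, Function.iterate_succ_apply', hf]
  have hystep : ∀ n : ℕ, y (n + 1) =
      (a' * x n + b' * y n + c') / (a'' * x n + b'' * y n + c'') := by
    intro n
    simp only [hx, hy, Function.iterate_succ_apply', hf]
  have htstep : ∀ n : ℕ, t n ≠ 0 → t (n + 1) = t n + q + 1 / t n := by
    intro n hTn
    have h5 : y (n + 1) = b' / b'' + 1 / (b * t n) := by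
      rw [hystep n]; exact hyval _ _ hTn
    have h6 : t (n + 1) = x (n + 1) + b * y (n + 1) + c := rfl
    rw [h6, hxstep n, h5, hq]
    have : x n + b * y n + c = t n := rfl
    rw [this]
    field_simp
    ring
  -- the 1D step lemma
  have hstep : ∀ T : ℝ, m ≤ T → T ≤ B → m ≤ T + q + 1 / T ∧ T + q + 1 / T ≤ B := by
    intro T h1T h2T
    have hT : 0 < T := lt_of_lt_of_le hm h1T
    have hTinv : T * (1 / T) = 1 := by field_simp
    have hAM : 2 ≤ T + 1 / T := by nlinarith [sq_nonneg (T - 1)]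
    constructor
    · have : 2 + q ≤ T + q + 1 / T := by linarith
      exact le_trans (min_le_right _ _) this
    · by_cases hc : T ≤ -1 / q
      · have h1T' : 1 / T ≤ 1 / m := one_div_le_one_div_of_le hm h1T
        have : T + q + 1 / T ≤ -1 / q + 1 / m := by linarith
        exact le_trans this (le_max_right _ _)
      · push_neg at hc
        have hq' : 0 < -q := by linarith
        have hqi : q * (1 / q) = 1 := by field_simp
        have h8 : -q * (-1 / q) = 1 := by field_simp
        have hkey : 1 / T < -q := by
          rw [div_lt_iff₀ hT]
          linarith [mul_lt_mul_of_pos_left hc hq', h8]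
        have : T + q + 1 / T < T := by linarith
        linarith
  -- invariant
  have hinv : ∀ n : ℕ, m ≤ t n ∧ t n ≤ B := by
    intro n
    induction n with
    | zero =>
        have : t 0 = x₀ + b * y₀ + c := rfl
        rw [this]
        exact ⟨min_le_left _ _, le_max_left _ _⟩
    | succ n ih =>
        have hTn : 0 < t n := lt_of_lt_of_le hm ih.1
        rw [htstep n (ne_of_gt hTn)]
        exact hstep (t n) ih.1 ih.2
  have htpos : ∀ n, 0 < t n := fun n => lt_of_lt_of_le hm (hinv n).1
  have hx0 : x 0 = x₀ := rfl
  have hy0 : y 0 = y₀ := rfl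
  have htdef : ∀ n : ℕ, t n = x n + b * y n + c := fun n => rfl
  clear_value t y x f m B
  refine ⟨x, y, hx0, hy0, ?_, hxstep, hystep, ?_⟩
  · intro n
    rw [hden (x n) (y n), ← htdef n]
    exact mul_ne_zero (div_ne_zero hb'' hb) (ne_of_gt (htpos n))
  · refine ⟨|x₀| + |y₀| + B + |b' / b''| + 1 / (|b| * m) + 1, ?_, ?_⟩
    · have h7 : 0 < 1 / (|b| * m) := by positivity
      have := abs_nonneg x₀
      have := abs_nonneg y₀
      have := abs_nonneg (b' / b'')
      linarith
    · intro n
      have h7 : 0 < 1 / (|b| * m) := by positivity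
      have hax : |x₀| ≥ 0 := abs_nonneg x₀
      have hay : |y₀| ≥ 0 := abs_nonneg y₀
      have hab : |b' / b''| ≥ 0 := abs_nonneg (b' / b'')
      constructor
      · cases n with
        | zero => rw [hx0]; linarith
        | succ n =>
            have hxv : x (n + 1) = t n := (hxstep n).trans (htdef n).symm
            rw [hxv, abs_of_pos (htpos n)]
            have h9 : t n ≤ B := (hinv n).2
            linarith
      · cases n with
        | zero => rw [hy0]; linarith
        | succ n =>
            have h5 : y (n + 1) = b' / b'' + 1 / (b * t n) := by
              rw [hystep n,
                hyval (x n) (y n) (by rw [← htdef n]; exact ne_of_gt (htpos n)), ← htdef n]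
            rw [h5]
            have habs : |1 / (b * t n)| ≤ 1 / (|b| * m) := by
              rw [abs_div, abs_one, abs_mul]
              apply one_div_le_one_div_of_le (by positivity)
              have : m ≤ |t n| := by rw [abs_of_pos (htpos n)]; exact (hinv n).1
              exact mul_le_mul_of_nonneg_left this (abs_nonneg b)
            calc |b' / b'' + 1 / (b * t n)| ≤ |b' / b''| + |1 / (b * t n)| := abs_add_le _ _
              _ ≤ |b' / b''| + 1 / (|b| * m) := by linarith
              _ ≤ |x₀| + |y₀| + B + |b' / b''| + 1 / (|b| * m) + 1 := by linarith
end

section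
/- Assume hypotheses (H): b ≠ 0, b'' ≠ 0, |a'| + |a''| > 0, |a''| + |b''| > 0, |a'| + |b'| + |c'| > 0, a = 1, a'·b = b', a''·b = b'', b''·c = b·c'', and b'' = b·(b·c' − b'·c); set q = c + b·b'/b''. Suppose −√(5/2) < q < −√2, and set x₁ = (−q − √(q² − 2))/2, x₂ = (−q + √(q² − 2))/2, y₁ = (x₂ − x₁ − c)/b, y₂ = (x₁ − x₂ − c)/b. Then (x₁, y₁) ≠ (x₂, y₂), the denominators a''·x_i + b''·y_i + c'' are nonzero for i = 1, 2, and {(x₁, y₁), (x₂, y₂)} is a cycle of minimal period 2 of the system: x₂ = x₁ + b·y₁ + c, y₂ = (a'·x₁ + b'·y₁ + c')/(a''·x₁ + b''·y₁ + c''), x₁ = x₂ + b·y₂ + c, and y₁ = (a'·x₂ + b'·y₂ + c')/(a''·x₂ + b''·y₂ + c''). -/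
set_option maxHeartbeats 1000000 in
/-- Under hypotheses (H) with `−√(5/2) < q < −√2`, the system has a cycle of
minimal period 2 given by `x₁ = (−q − √(q² − 2))/2`, `x₂ = (−q + √(q² − 2))/2`
and the corresponding `y`-values from the folding. -/
theorem stmt_10 (a b c a' b' c' a'' b'' c'' q : ℝ)
    (hb : b ≠ 0) (hb'' : b'' ≠ 0)
    (hnt1 : |a'| + |a''| > 0) (hnt2 : |a''| + |b''| > 0)
    (hnt3 : |a'| + |b'| + |c'| > 0)
    (ha : a = 1) (h1 : a' * b = b') (h2 : a'' * b = b'') (h3 : b'' * c = b * c'')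
    (h4 : b'' = b * (b * c' - b' * c))
    (hq : q = c + b * b' / b'')
    (hq1 : -Real.sqrt (5 / 2) < q) (hq2 : q < -Real.sqrt 2)
    (x₁ x₂ y₁ y₂ : ℝ)
    (hx₁ : x₁ = (-q - Real.sqrt (q ^ 2 - 2)) / 2)
    (hx₂ : x₂ = (-q + Real.sqrt (q ^ 2 - 2)) / 2)
    (hy₁ : y₁ = (x₂ - x₁ - c) / b)
    (hy₂ : y₂ = (x₁ - x₂ - c) / b) :
    (x₁, y₁) ≠ (x₂, y₂) ∧
    a'' * x₁ + b'' * y₁ + c'' ≠ 0 ∧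
    a'' * x₂ + b'' * y₂ + c'' ≠ 0 ∧
    x₂ = x₁ + b * y₁ + c ∧
    y₂ = (a' * x₁ + b' * y₁ + c') / (a'' * x₁ + b'' * y₁ + c'') ∧
    x₁ = x₂ + b * y₂ + c ∧
    y₁ = (a' * x₂ + b' * y₂ + c') / (a'' * x₂ + b'' * y₂ + c'') := by
  clear hnt1 hnt2 hnt3 ha hq1
  have hq0 : q < 0 := lt_of_lt_of_le hq2 (neg_nonpos.mpr (Real.sqrt_nonneg 2))
  have hq2' : Real.sqrt 2 < -q := by linarith
  have hqsq : 2 < q ^ 2 := by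
    have h2' : Real.sqrt 2 * Real.sqrt 2 = 2 := Real.mul_self_sqrt (by norm_num)
    nlinarith [Real.sqrt_nonneg 2, hq2']
  set s := Real.sqrt (q ^ 2 - 2) with hs
  have hs2 : s ^ 2 = q ^ 2 - 2 := Real.sq_sqrt (by linarith)
  have hspos : 0 < s := Real.sqrt_pos.mpr (by linarith)
  -- product and root equations
  have hprod : x₁ * x₂ = 1 / 2 := by rw [hx₁, hx₂]; nlinarith
  have hx₁ne : x₁ ≠ 0 := by intro h; rw [h] at hprod; norm_num at hprod
  have hx₂ne : x₂ ≠ 0 := by intro h; rw [h] at hprod; norm_num at hprod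
  have hroot1 : x₁ ^ 2 + q * x₁ + 1 / 2 = 0 := by rw [hx₁]; nlinarith
  have hroot2 : x₂ ^ 2 + q * x₂ + 1 / 2 = 0 := by rw [hx₂]; nlinarith
  have hne : x₁ ≠ x₂ := by rw [hx₁, hx₂]; intro h; nlinarith
  -- parameter relation: b*b' = (q - c) * b''
  have hbb' : b * b' = (q - c) * b'' := by
    field_simp at hq; linarith
  -- denominators
  have hD1 : a'' * x₁ + b'' * y₁ + c'' = b'' * x₂ / b := by
    rw [hy₁]; field_simp; linear_combination x₁ * h2 - h3
  have hD2 : a'' * x₂ + b'' * y₂ + c'' = b'' * x₁ / b := by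
    rw [hy₂]; field_simp; linear_combination x₂ * h2 - h3
  have hD1ne : a'' * x₁ + b'' * y₁ + c'' ≠ 0 := by
    rw [hD1]; exact div_ne_zero (mul_ne_zero hb'' hx₂ne) hb
  have hD2ne : a'' * x₂ + b'' * y₂ + c'' ≠ 0 := by
    rw [hD2]; exact div_ne_zero (mul_ne_zero hb'' hx₁ne) hb
  refine ⟨?_, hD1ne, hD2ne, ?_, ?_, ?_, ?_⟩
  · intro h; exact hne (congrArg Prod.fst h)
  · rw [hy₁]; field_simp; ring
  · rw [eq_div_iff hD1ne, hD1]
    rw [hy₁, hy₂]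
    field_simp
    linear_combination (-(x₁*b))*h1 + (-(x₂))*hbb' + (b'')*hprod - (b'')*hroot2 + h4
  · rw [hy₂]; field_simp; ring
  · rw [eq_div_iff hD2ne, hD2]
    rw [hy₁, hy₂]
    field_simp
    linear_combination (-(x₂*b))*h1 + (-(x₁))*hbb' + (b'')*hprod - (b'')*hroot1 + h4
end

section
/- Assume hypotheses (H): b ≠ 0, b'' ≠ 0, |a'| + |a''| > 0, |a''| + |b''| > 0, |a'| + |b'| + |c'| > 0, a = 1, a'·b = b', a''·b = b'', b''·c = b·c'', and b'' = b·(b·c' − b'·c). Suppose in addition b·b' = −b''·(c + √3) (equivalently q = c + b·b'/b'' = −√3). Set x₁ = (2/√3)·(1 + cos(π/9)), x₂ = x₁ − √3 + 1/x₁, x₃ = x₂ − √3 + 1/x₂, y₁ = (x₂ − x₁ − c)/b, y₂ = (x₃ − x₂ − c)/b, y₃ = (x₁ − x₃ − c)/b. Then the points (x₁, y₁), (x₂, y₂), (x₃, y₃) are pairwise distinct, the denominators a''·x_i + b''·y_i + c'' are nonzero for i = 1, 2, 3, and these three points form a cycle of minimal period 3 of the system: applying one step of the system to (x₁, y₁)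 gives (x₂, y₂), to (x₂, y₂) gives (x₃, y₃), and to (x₃, y₃) gives (x₁, y₁). -/
set_option maxHeartbeats 1000000 in
/-- Under hypotheses (H) with `b·b' = −b''·(c + √3)` (i.e. `q = −√3`), the
system has a cycle of minimal period 3 given by `x₁ = (2/√3)(1 + cos(π/9))`,
`x₂ = f(x₁)`, `x₃ = f(x₂)` with `f(t) = t − √3 + 1/t`, and the corresponding
`y`-values from the folding. -/
theorem stmt_11 (a b c a' b' c' a'' b'' c'' : ℝ)
    (hb : b ≠ 0) (hb'' : b'' ≠ 0)
    (hnt1 : |a'| + |a''| > 0) (hnt2 : |a''| + |b''| > 0)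
    (hnt3 : |a'| + |b'| + |c'| > 0)
    (ha : a = 1) (h1 : a' * b = b') (h2 : a'' * b = b'') (h3 : b'' * c = b * c'')
    (h4 : b'' = b * (b * c' - b' * c))
    (hq : b * b' = -b'' * (c + Real.sqrt 3))
    (x₁ x₂ x₃ y₁ y₂ y₃ : ℝ)
    (hx₁ : x₁ = 2 / Real.sqrt 3 * (1 + Real.cos (Real.pi / 9)))
    (hx₂ : x₂ = x₁ - Real.sqrt 3 + 1 / x₁)
    (hx₃ : x₃ = x₂ - Real.sqrt 3 + 1 / x₂)
    (hy₁ : y₁ = (x₂ - x₁ - c) / b)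
    (hy₂ : y₂ = (x₃ - x₂ - c) / b)
    (hy₃ : y₃ = (x₁ - x₃ - c) / b) :
    (x₁, y₁) ≠ (x₂, y₂) ∧ (x₁, y₁) ≠ (x₃, y₃) ∧ (x₂, y₂) ≠ (x₃, y₃) ∧
    a'' * x₁ + b'' * y₁ + c'' ≠ 0 ∧
    a'' * x₂ + b'' * y₂ + c'' ≠ 0 ∧
    a'' * x₃ + b'' * y₃ + c'' ≠ 0 ∧
    x₂ = x₁ + b * y₁ + c ∧
    y₂ = (a' * x₁ + b' * y₁ + c') / (a'' * x₁ + b'' * y₁ + c'') ∧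
    x₃ = x₂ + b * y₂ + c ∧
    y₃ = (a' * x₂ + b' * y₂ + c') / (a'' * x₂ + b'' * y₂ + c'') ∧
    x₁ = x₃ + b * y₃ + c ∧
    y₁ = (a' * x₃ + b' * y₃ + c') / (a'' * x₃ + b'' * y₃ + c'') := by
  clear hnt1 hnt2 hnt3 ha
  set s := Real.sqrt 3 with hsdef
  set c1 := Real.cos (Real.pi / 9) with hc1def
  have hs2 : s ^ 2 = 3 := Real.sq_sqrt (by norm_num)
  have hspos : (0:ℝ) < s := Real.sqrt_pos.mpr (by norm_num)
  have hslb : (1.732:ℝ) < s := by nlinarith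
  have hsub : s < 1.7321 := by nlinarith
  have hc1ub : c1 ≤ 1 := Real.cos_le_one _
  have hc1lb : s / 2 < c1 := by
    have h9 : Real.cos (Real.pi / 6) < Real.cos (Real.pi / 9) :=
      Real.cos_lt_cos_of_nonneg_of_le_pi (by positivity)
        (by linarith [Real.pi_pos]) (by linarith [Real.pi_pos])
    rw [Real.cos_pi_div_six] at h9
    rw [← hc1def, ← hsdef] at h9
    linarith
  have hc3 : 8 * c1 ^ 3 - 6 * c1 - 1 = 0 := by
    have h := Real.cos_three_mul (Real.pi / 9)
    rw [show 3 * (Real.pi / 9) = Real.pi / 3 by ring, Real.cos_pi_div_three] at h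
    rw [← hc1def] at h
    nlinarith [h]
  have hx1s : x₁ * s = 2 + 2 * c1 := by
    rw [hx₁]; field_simp
  -- bounds
  have hx1lb : (2.15:ℝ) < x₁ := by nlinarith [hx1s, hc1lb, hsub, hspos]
  have hx1ub : x₁ < 2.31 := by nlinarith [hx1s, hc1ub, hslb, hspos]
  have hx1pos : (0:ℝ) < x₁ := by linarith
  have hx1ne : x₁ ≠ 0 := hx1pos.ne'
  have hx1inv : x₁ * (1 / x₁) = 1 := mul_one_div_cancel hx1ne
  have hx2lb : (0.85:ℝ) < x₂ := by rw [hx₂]; nlinarith [hx1inv]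
  have hx2ub : x₂ < 1.05 := by rw [hx₂]; nlinarith [hx1inv]
  have hx2pos : (0:ℝ) < x₂ := by linarith
  have hx2ne : x₂ ≠ 0 := hx2pos.ne'
  have hx2inv : x₂ * (1 / x₂) = 1 := mul_one_div_cancel hx2ne
  have hx3lb : (0.26:ℝ) < x₃ := by rw [hx₃]; nlinarith [hx2inv, sq_nonneg (x₂ - 1)]
  have hx3ub : x₃ < 0.5 := by rw [hx₃]; nlinarith [hx2inv]
  have hx3pos : (0:ℝ) < x₃ := by linarith
  have hx3ne : x₃ ≠ 0 := hx3pos.ne'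
  -- cubic satisfied by x₁ and the cycle-closing identity
  have hp1s : (s * x₁ ^ 3 - 6 * x₁ ^ 2 + 3 * s * x₁ - 1) * s ^ 2 = 0 := by
    linear_combination (s^2*x₁^2 + 2*s*c1*x₁ + 4*c1^2 - 4*s*x₁ + 3*s^2 - 4*c1 - 8) * hx1s
      + (6*c1 + 5) * hs2 + hc3
  have hp1 : s * x₁ ^ 3 - 6 * x₁ ^ 2 + 3 * s * x₁ - 1 = 0 := by
    have hss : s ^ 2 ≠ 0 := pow_ne_zero _ hspos.ne'
    exact (mul_eq_zero.mp hp1s).resolve_right hss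
  have hg3 : x₂ * x₁ = x₁ ^ 2 - s * x₁ + 1 := by
    rw [hx₂]; field_simp
  have hg4 : x₃ * x₂ = x₂ ^ 2 - s * x₂ + 1 := by
    rw [hx₃]; field_simp
  have key3' : ((x₁ - x₃ + s) * x₃ - 1) * (x₂ ^ 2 * x₁ ^ 4 * s ^ 4) = 0 := by
    linear_combination
      (-s^4*x₁^4*x₂*x₃ - s^4*x₁^4*x₂^2 + s^4*x₁^5*x₂ + 2*s^5*x₁^4*x₂ - s^4*x₁^4) * hg4 +
      (-s^4*x₁^3*x₂^3 + 4*s^5*x₁^3*x₂^2 + 3*s^5*x₁^4*x₂ + 3*s^5*x₁^5 - 6*s^6*x₁^3*x₂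
        - 9*s^6*x₁^4 + 6*s^7*x₁^3 - s^4*x₁^2*x₂^2 - 4*s^4*x₁^3*x₂ - 3*s^4*x₁^4
        + 5*s^5*x₁^2*x₂ + 15*s^5*x₁^3 - 11*s^6*x₁^2 - s^4*x₁*x₂ - 5*s^4*x₁^2
        + 6*s^5*x₁ - s^4) * hg3 +
      (3*s^4*x₁^4 - 12*s^5*x₁^3 + 15*s^6*x₁^2 - 6*s^7*x₁ + 15*s^3*x₁^3 - 60*s^4*x₁^2
        + 91*s^5*x₁ - 64*s^6 + 90*s^2*x₁^2 - 411*s^3*x₁ + 740*s^4 + 540*s*x₁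
        - 2721*s^2 + 3240) * hp1 +
      (18*s^6*x₁^2 - 605*s^4*x₁^2 + 186*s^5*x₁ - 1564*s^3*x₁ - 64*s^4 + 3792*s^2*x₁^2
        - 6480*x₁^2 + 3060*s*x₁ + 547*s^2 - 1080) * hs2
  have key3 : (x₁ - x₃ + s) * x₃ = 1 := by
    have hnz : x₂ ^ 2 * x₁ ^ 4 * s ^ 4 ≠ 0 :=
      mul_ne_zero (mul_ne_zero (pow_ne_zero _ hx2ne) (pow_ne_zero _ hx1ne))
        (pow_ne_zero _ hspos.ne')
    have h := (mul_eq_zero.mp key3').resolve_right hnz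
    linarith
  have hx₁' : x₁ = x₃ - s + 1 / x₃ := by
    field_simp
    linear_combination key3
  -- parameter identities
  have ha' : a' = b' / b := by rw [eq_div_iff hb]; exact h1
  have ha'' : a'' = b'' / b := by rw [eq_div_iff hb]; exact h2
  have hc'' : c'' = b'' * c / b := by rw [eq_div_iff hb]; linear_combination -h3
  have hc' : c' = b'' / b ^ 2 + b' * c / b := by
    field_simp
    linear_combination -h4
  have hcq : c = -s - b * b' / b'' := by
    field_simp
    linear_combination hq
  -- denominators
  have hDne : b'' / b ≠ 0 := div_ne_zero hb'' hb
  have hD1 : a'' * x₁ + b'' * y₁ + c'' = b'' / b * x₂ := by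
    rw [hy₁, ha'', hc'']; field_simp; ring
  have hD2 : a'' * x₂ + b'' * y₂ + c'' = b'' / b * x₃ := by
    rw [hy₂, ha'', hc'']; field_simp; ring
  have hD3 : a'' * x₃ + b'' * y₃ + c'' = b'' / b * x₁ := by
    rw [hy₃, ha'', hc'']; field_simp; ring
  have hne12 : x₁ ≠ x₂ := by intro h; rw [h] at hx1lb; linarith
  have hne13 : x₁ ≠ x₃ := by intro h; rw [h] at hx1lb; linarith
  have hne23 : x₂ ≠ x₃ := by intro h; rw [h] at hx2lb; linarith
  refine ⟨fun h => hne12 (congrArg Prod.fst h), fun h => hne13 (congrArg Prod.fst h),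
    fun h => hne23 (congrArg Prod.fst h), ?_, ?_, ?_, ?_, ?_, ?_, ?_, ?_, ?_⟩
  · rw [hD1]; exact mul_ne_zero hDne hx2ne
  · rw [hD2]; exact mul_ne_zero hDne hx3ne
  · rw [hD3]; exact mul_ne_zero hDne hx1ne
  · rw [hy₁]; field_simp; ring
  · rw [hD1, eq_div_iff (mul_ne_zero hDne hx2ne), hy₂, hx₃, hy₁, ha', hc', hcq]
    field_simp
    ring
  · rw [hy₂]; field_simp; ring
  · rw [hD2, eq_div_iff (mul_ne_zero hDne hx3ne), hy₃, hx₁', hy₂, ha', hc', hcq]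
    field_simp
    ring
  · rw [hy₃]; field_simp; ring
  · rw [hD3, eq_div_iff (mul_ne_zero hDne hx1ne), hy₁, hx₂, hy₃, ha', hc', hcq]
    field_simp
    ring
end

section
/- Assume hypotheses (H): b ≠ 0, b'' ≠ 0, |a'| + |a''| > 0, |a''| + |b''| > 0, |a'| + |b'| + |c'| > 0, a = 1, a'·b = b', a''·b = b'', b''·c = b·c'', and b'' = b·(b·c' − b'·c); set q = c + b·b'/b''. If −2 < q < −√3, then the system exhibits Li–Yorke chaotic behavior: there exists an uncountable set S of initial points (x₀, y₀) with x₀ + b·y₀ + c > 0 such that each orbit starting in S is well-defined (all denominators a''·x_n + b''·y_n + c'' are nonzero) and bounded, and for any two distinct initial points in S, the Euclidean distance between the corresponding orbits at time n has strictly positive limsup and zero liminf as n → ∞. -/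
/-- One step of the planar rational system (with `a = 1`):
`(x, y) ↦ (x + b·y + c, (a'·x + b'·y + c')/(a''·x + b''·y + c''))`. -/
noncomputable def sysStep (b c a' b' c' a'' b'' c'' : ℝ) (p : ℝ × ℝ) : ℝ × ℝ :=
  (p.1 + b * p.2 + c,
    (a' * p.1 + b' * p.2 + c') / (a'' * p.1 + b'' * p.2 + c''))


open Filter

namespace LY13

/-- An expanding two-branch horseshoe datum for a map `g` on `[k1,k2] ⊂ ℝ`. -/
structure Horseshoe (g : ℝ → ℝ) where
  k1 : ℝ
  k2 : ℝ
  A : Bool → ℝ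
  B : Bool → ℝ
  r : ℝ
  hr0 : 0 ≤ r
  hr1 : r < 1
  hk : k1 ≤ k2
  hsub1 : ∀ j, k1 ≤ A j
  hsub2 : ∀ j, A j ≤ B j
  hsub3 : ∀ j, B j ≤ k2
  hgap : B false < A true
  h : Bool → ℝ → ℝ
  hmem1 : ∀ j y, k1 ≤ y → y ≤ k2 → A j ≤ h j y
  hmem2 : ∀ j y, k1 ≤ y → y ≤ k2 → h j y ≤ B j
  hinv : ∀ j y, k1 ≤ y → y ≤ k2 → g (h j y) = y
  hlip : ∀ j y y', k1 ≤ y → y ≤ k2 → k1 ≤ y' → y' ≤ k2 →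
    |h j y - h j y'| ≤ r * |y - y'|

namespace Horseshoe

variable {g : ℝ → ℝ}

/-- Finite approximations to the itinerary point. -/
noncomputable def approx (H : Horseshoe g) : ℕ → (ℕ → Bool) → ℝ
  | 0, _ => H.k2
  | n+1, s => H.h (s 0) (H.approx n (fun i => s (i+1)))

variable (H : Horseshoe g)

lemma approx_zero (s : ℕ → Bool) : H.approx 0 s = H.k2 := rfl

lemma approx_succ (n : ℕ) (s : ℕ → Bool) :
    H.approx (n+1) s = H.h (s 0) (H.approx n (fun i => s (i+1))) := rfl

lemma abs_sub_le_of_mem {x y : ℝ} (hx1 : H.k1 ≤ x) (hx2 : x ≤ H.k2)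
    (hy1 : H.k1 ≤ y) (hy2 : y ≤ H.k2) : |x - y| ≤ H.k2 - H.k1 := by
  rw [abs_le]; constructor <;> linarith

lemma approx_mem (n : ℕ) (s : ℕ → Bool) :
    H.k1 ≤ H.approx n s ∧ H.approx n s ≤ H.k2 := by
  induction n generalizing s with
  | zero => exact ⟨H.hk, le_refl _⟩
  | succ n ih =>
    obtain ⟨h1, h2⟩ := ih (fun i => s (i+1))
    rw [approx_succ]
    exact ⟨le_trans (H.hsub1 (s 0)) (H.hmem1 _ _ h1 h2),
      le_trans (H.hmem2 _ _ h1 h2) (H.hsub3 (s 0))⟩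

lemma approx_in_I (n : ℕ) (s : ℕ → Bool) :
    H.A (s 0) ≤ H.approx (n+1) s ∧ H.approx (n+1) s ≤ H.B (s 0) := by
  obtain ⟨h1, h2⟩ := H.approx_mem n (fun i => s (i+1))
  rw [approx_succ]
  exact ⟨H.hmem1 _ _ h1 h2, H.hmem2 _ _ h1 h2⟩

lemma approx_cauchy_step (n : ℕ) (s : ℕ → Bool) :
    |H.approx (n+1) s - H.approx n s| ≤ H.r ^ n * (H.k2 - H.k1) := by
  induction n generalizing s with
  | zero =>
    have h1 := H.approx_mem 1 s
    rw [pow_zero, one_mul]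
    exact H.abs_sub_le_of_mem h1.1 h1.2 (H.approx_mem 0 s).1 (H.approx_mem 0 s).2
  | succ n ih =>
    have hm := H.approx_mem (n+1) (fun i => s (i+1))
    have hm' := H.approx_mem n (fun i => s (i+1))
    have hl := H.hlip (s 0) _ _ hm.1 hm.2 hm'.1 hm'.2
    have h2 := ih (fun i => s (i+1))
    rw [H.approx_succ (n+1) s, H.approx_succ n s]
    calc |H.h (s 0) (H.approx (n+1) fun i => s (i+1)) -
          H.h (s 0) (H.approx n fun i => s (i+1))|
        ≤ H.r * |(H.approx (n+1) fun i => s (i+1)) - H.approx n fun i => s (i+1)| := hl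
      _ ≤ H.r * (H.r ^ n * (H.k2 - H.k1)) := mul_le_mul_of_nonneg_left h2 H.hr0
      _ = H.r ^ (n+1) * (H.k2 - H.k1) := by ring

lemma approx_cauchySeq (s : ℕ → Bool) : CauchySeq (fun n => H.approx n s) := by
  apply cauchySeq_of_le_geometric H.r (H.k2 - H.k1) H.hr1
  intro n
  rw [Real.dist_eq, abs_sub_comm]
  calc |H.approx (n+1) s - H.approx n s| ≤ H.r ^ n * (H.k2 - H.k1) :=
      H.approx_cauchy_step n s
    _ = (H.k2 - H.k1) * H.r ^ n := by ring

/-- The itinerary point associated to a symbol sequence. -/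
noncomputable def pt (s : ℕ → Bool) : ℝ :=
  limUnder atTop (fun n => H.approx n s)

lemma tendsto_pt (s : ℕ → Bool) :
    Tendsto (fun n => H.approx n s) atTop (nhds (H.pt s)) :=
  (H.approx_cauchySeq s).tendsto_limUnder

lemma pt_mem (s : ℕ → Bool) : H.k1 ≤ H.pt s ∧ H.pt s ≤ H.k2 :=
  ⟨ge_of_tendsto' (H.tendsto_pt s) (fun n => (H.approx_mem n s).1),
   le_of_tendsto' (H.tendsto_pt s) (fun n => (H.approx_mem n s).2)⟩

lemma pt_in_I (s : ℕ → Bool) : H.A (s 0) ≤ H.pt s ∧ H.pt s ≤ H.B (s 0) := by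
  constructor
  · apply ge_of_tendsto (H.tendsto_pt s)
    filter_upwards [eventually_ge_atTop 1] with n hn
    obtain ⟨m, rfl⟩ : ∃ m, n = m + 1 := ⟨n - 1, by omega⟩
    exact (H.approx_in_I m s).1
  · apply le_of_tendsto (H.tendsto_pt s)
    filter_upwards [eventually_ge_atTop 1] with n hn
    obtain ⟨m, rfl⟩ : ∃ m, n = m + 1 := ⟨n - 1, by omega⟩
    exact (H.approx_in_I m s).2

lemma pt_eq_h (s : ℕ → Bool) : H.pt s = H.h (s 0) (H.pt (fun i => s (i+1))) := by
  set t := fun i => s (i+1) with ht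
  have hptK := H.pt_mem t
  have h1 : Tendsto (fun n => H.approx (n+1) s) atTop (nhds (H.pt s)) :=
    (H.tendsto_pt s).comp (tendsto_add_atTop_nat 1)
  have h2 : Tendsto (fun n => H.approx (n+1) s) atTop
      (nhds (H.h (s 0) (H.pt t))) := by
    have key : ∀ n, |H.approx (n+1) s - H.h (s 0) (H.pt t)| ≤
        H.r * |H.approx n t - H.pt t| := by
      intro n
      have hm := H.approx_mem n t
      rw [approx_succ]
      exact H.hlip (s 0) _ _ hm.1 hm.2 hptK.1 hptK.2
    rw [Metric.tendsto_atTop]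
    intro ε hε
    have htd : Tendsto (fun n => H.r * |H.approx n t - H.pt t|) atTop (nhds 0) := by
      have h0 : Tendsto (fun n => H.approx n t - H.pt t) atTop (nhds (H.pt t - H.pt t)) :=
        (H.tendsto_pt t).sub tendsto_const_nhds
      rw [sub_self] at h0
      have := (h0.abs).const_mul H.r
      simpa using this
    rw [Metric.tendsto_atTop] at htd
    obtain ⟨N, hN⟩ := htd ε hε
    refine ⟨N, fun n hn => ?_⟩
    have hd := hN n hn
    simp only [Real.dist_eq, sub_zero] at hd ⊢
    have h0 : (0:ℝ) ≤ H.r * |H.approx n t - H.pt t| :=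
      mul_nonneg H.hr0 (abs_nonneg _)
    rw [abs_of_nonneg h0] at hd
    exact lt_of_le_of_lt (key n) hd
  exact tendsto_nhds_unique h1 h2

lemma g_pt (s : ℕ → Bool) : g (H.pt s) = H.pt (fun i => s (i+1)) := by
  have hptK := H.pt_mem (fun i => s (i+1))
  rw [H.pt_eq_h s]
  exact H.hinv (s 0) _ hptK.1 hptK.2

lemma g_iter_pt (k : ℕ) (s : ℕ → Bool) : g^[k] (H.pt s) = H.pt (fun i => s (i+k)) := by
  induction k generalizing s with
  | zero => simp
  | succ k ih =>
    have he : (fun i => s (i + k + 1)) = (fun i => s (i + (k+1))) := rfl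
    rw [Function.iterate_succ_apply, H.g_pt s, ih, he]

lemma pt_close (N : ℕ) (s t : ℕ → Bool) (hagree : ∀ i < N, s i = t i) :
    |H.pt s - H.pt t| ≤ H.r ^ N * (H.k2 - H.k1) := by
  induction N generalizing s t with
  | zero =>
    have h1 := H.pt_mem s
    have h2 := H.pt_mem t
    rw [pow_zero, one_mul]
    exact H.abs_sub_le_of_mem h1.1 h1.2 h2.1 h2.2
  | succ N ih =>
    have h0 : s 0 = t 0 := hagree 0 (Nat.succ_pos N)
    have hs' := H.pt_mem (fun i => s (i+1))
    have ht' := H.pt_mem (fun i => t (i+1))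
    have hlip := H.hlip (s 0) _ _ hs'.1 hs'.2 ht'.1 ht'.2
    have hrec := ih (fun i => s (i+1)) (fun i => t (i+1))
      (fun i hi => hagree (i+1) (by omega))
    rw [H.pt_eq_h s, H.pt_eq_h t, ← h0]
    calc |H.h (s 0) (H.pt fun i => s (i+1)) - H.h (s 0) (H.pt fun i => t (i+1))|
        ≤ H.r * |(H.pt fun i => s (i+1)) - H.pt fun i => t (i+1)| := hlip
      _ ≤ H.r * (H.r ^ N * (H.k2 - H.k1)) := mul_le_mul_of_nonneg_left hrec H.hr0
      _ = H.r ^ (N+1) * (H.k2 - H.k1) := by ring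

lemma pt_apart (s t : ℕ → Bool) (hne : s 0 ≠ t 0) :
    H.A true - H.B false ≤ |H.pt s - H.pt t| := by
  have hs := H.pt_in_I s
  have ht := H.pt_in_I t
  have hgap := H.hgap
  rcases Bool.eq_false_or_eq_true (s 0) with h0 | h0 <;>
    rcases Bool.eq_false_or_eq_true (t 0) with h1 | h1 <;>
      rw [h0] at hs hne <;> rw [h1] at ht hne
  · exact absurd rfl hne
  · -- s 0 = true, t 0 = false
    rw [abs_of_nonneg (by linarith)]
    linarith
  · -- s 0 = false, t 0 = true
    rw [abs_sub_comm, abs_of_nonneg (by linarith)]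
    linarith
  · exact absurd rfl hne

end Horseshoe
end LY13

namespace LY13

noncomputable section

/-- The one-dimensional map `w ↦ w - p + 1/w`. -/
def fm (p w : ℝ) : ℝ := w - p + w⁻¹

/-- Its second iterate. -/
def gm (p w : ℝ) : ℝ := fm p (fm p w)

lemma fm_diff (p : ℝ) {x y : ℝ} (hx : x ≠ 0) (hy : y ≠ 0) :
    fm p x - fm p y = (x - y) * ((x*y - 1)/(x*y)) := by
  unfold fm
  field_simp
  ring

lemma fm_ge (p : ℝ) {x : ℝ} (hx : 0 < x) : 2 - p ≤ fm p x := by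
  unfold fm
  have h : 2 ≤ x + x⁻¹ := by
    have h1 : x * x⁻¹ = 1 := mul_inv_cancel₀ (ne_of_gt hx)
    nlinarith [sq_nonneg (x - 1)]
  linarith

/-- The small root of `x² - s·x + 1` for `s > 2`. -/
lemma root_small {s : ℝ} (hs : 2 < s) :
    ∃ x : ℝ, 0 < x ∧ x < 1 ∧ x^2 - s*x + 1 = 0 := by
  have h40 : (0:ℝ) ≤ s^2 - 4 := by nlinarith
  set e := Real.sqrt (s^2 - 4) with he
  have he2 : e^2 = s^2 - 4 := Real.sq_sqrt h40
  have he0 : 0 ≤ e := Real.sqrt_nonneg _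
  have hes : e < s := by nlinarith
  refine ⟨(s - e)/2, by nlinarith, by nlinarith, by nlinarith⟩

/-- `x ↦ x + 1/x` is antitone on `(0,1]`. -/
lemma mono_aux {u v : ℝ} (hu : 0 < u) (huv : u ≤ v) (hv : v ≤ 1) :
    v + v⁻¹ ≤ u + u⁻¹ := by
  have hv0 : 0 < v := lt_of_lt_of_le hu huv
  have h1 : u * u⁻¹ = 1 := mul_inv_cancel₀ (ne_of_gt hu)
  have h2 : v * v⁻¹ = 1 := mul_inv_cancel₀ (ne_of_gt hv0)
  have key : (v - u) * (1 - u*v) ≥ 0 :=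
    mul_nonneg (by linarith) (by nlinarith)
  have huv0 : 0 < u * v := mul_pos hu hv0
  rw [← sub_nonneg]
  have expand : (u + u⁻¹) - (v + v⁻¹) = ((v - u) * (1 - u*v)) / (u*v) := by
    field_simp
    ring
  rw [expand]
  positivity

/-- If `x` is a root of `x² - s·x + 1` with `0 < x < 1` and the quadratic is
negative at `β < 1`, then `x < β`. -/
lemma root_lt_of {s x β : ℝ} (hq : x^2 - s*x + 1 = 0) (hx0 : 0 < x) (hx1 : x < 1)
    (hβ0 : 0 < β) (hβ1 : β < 1) (hQβ : β^2 - s*β + 1 < 0) : x < β := by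
  by_contra hcon
  push_neg at hcon
  have key : (x - β) * (1 - x) ≥ 0 := mul_nonneg (by linarith) (by linarith)
  have hsb : 0 < s - 1 - β := by
    have h5 : (s - 1 - β) * β > 0 := by nlinarith
    by_contra h6
    push_neg at h6
    nlinarith
  have h6 : (s - 1 - β) * (x - β) ≥ 0 := mul_nonneg (le_of_lt hsb) (by linarith)
  nlinarith [hq, hQβ, key, h6]

/-- All the numerical facts about the horseshoe construction. -/
structure Pfacts (p wh t1 a1 b0 : ℝ) : Prop where
  hp732 : (433:ℝ)/250 < p
  hp2 : p < 2
  hp3 : 3 < p^2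
  whpos : 0 < wh
  wh1 : wh < 1
  whq : wh^2 - 2*p*wh + 1 = 0
  whlow : 2 - p < wh
  whlt : wh < 1/p
  t1pos : 0 < t1
  t1le : t1 ≤ 81/100
  t1q : t1^2 - (p+wh)*t1 + 1 = 0
  t1gt : 1 < p * t1
  t1lt1 : t1 < 1
  a1pos : 0 < a1
  a1lt1 : a1 < 1
  a1q : a1^2 - (p+t1)*a1 + 1 = 0
  b0pos : 0 < b0
  b0le : b0 ≤ 97/250
  b0lt1 : b0 < 1
  b0q : b0^2 - (p + 1/t1)*b0 + 1 = 0
  order1 : wh < b0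
  order2 : b0 < a1
  order3 : a1 < 1/p

set_option maxHeartbeats 1000000 in
lemma pfacts_exists {p : ℝ} (hp1 : Real.sqrt 3 < p) (hp2 : p < 2) :
    ∃ wh t1 a1 b0, Pfacts p wh t1 a1 b0 := by
  have hs3 : (Real.sqrt 3)^2 = 3 := Real.sq_sqrt (by norm_num)
  have hs3n : (0:ℝ) ≤ Real.sqrt 3 := Real.sqrt_nonneg 3
  have hp732 : (433:ℝ)/250 < p := by nlinarith [sq_nonneg (Real.sqrt 3 - 433/250)]
  have hp0 : 0 < p := by linarith
  have hp3 : 3 < p^2 := by nlinarith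
  -- wh
  obtain ⟨wh, whpos, wh1, whq⟩ := root_small (s := 2*p) (by linarith)
  have whq' : wh^2 - 2*p*wh + 1 = 0 := by linarith [whq]
  have whmul : wh * (2*p - wh) = 1 := by linear_combination -whq'
  have whinv : wh⁻¹ = 2*p - wh := inv_eq_of_mul_eq_one_right whmul
  have whlt : wh < 1/p := by
    rw [lt_div_iff₀ hp0]
    nlinarith [whq']
  have whlow : 2 - p < wh := by
    by_contra hcon
    push_neg at hcon
    nlinarith [mul_nonneg (by linarith : (0:ℝ) ≤ 2 - p - wh) (by nlinarith : (0:ℝ) ≤ 3*p - 2 - wh), whq']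
  -- s = p + wh > 409/200
  have hsl : 409/200 < p + wh := by
    have he2 : (p - wh)^2 = p^2 - 1 := by linear_combination whq'
    by_contra hcon
    push_neg at hcon
    have h2 : 2*p - 409/200 ≤ p - wh := by linarith
    have h3 : 0 < 2*p - 409/200 := by linarith
    have h4 : (2*p - 409/200)*(2*p - 409/200) ≤ (p - wh)*(p - wh) :=
      mul_le_mul h2 h2 (le_of_lt h3) (by linarith)
    nlinarith [sq_nonneg (p - 433/250), h4, (by linarith : (0:ℝ) < p - 433/250)]
  -- t1
  obtain ⟨t1, t1pos, t1lt1, t1q⟩ := root_small (s := p + wh) (by linarith)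
  have t1le : t1 ≤ 81/100 := by
    refine le_of_lt (root_lt_of t1q t1pos t1lt1 (by norm_num) (by norm_num) ?_)
    nlinarith
  have t1gt : 1 < p * t1 := by
    -- (p - t1)(p - 1/t1) > 0 and p > t1
    have hq : (p - t1) * (p * t1 - 1) = (1 - p*wh) * t1 := by
      linear_combination (-p) * t1q
    have h1 : 0 < 1 - p*wh := by nlinarith [whq']
    have h2 : 0 < p - t1 := by nlinarith
    nlinarith [mul_pos h1 t1pos]
  -- a1
  obtain ⟨a1, a1pos, a1lt1, a1q⟩ := root_small (s := p + t1) (by nlinarith)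
  -- b0 : root for s = p + 1/t1
  have ht2 : (1:ℝ) < 1/t1 := by
    rw [lt_div_iff₀ t1pos]; linarith
  obtain ⟨b0, b0pos, b0lt1, b0q⟩ := root_small (s := p + 1/t1) (by linarith)
  have hinvt1 : t1 * (1/t1) = 1 := by field_simp
  have ht2le : 100/81 ≤ 1/t1 := by
    rw [le_div_iff₀ t1pos]; linarith
  have ht2lt : 1/t1 < p := by
    rw [div_lt_iff₀ t1pos]; linarith
  have b0le : b0 ≤ 97/250 := by
    refine le_of_lt (root_lt_of b0q b0pos b0lt1 (by norm_num) (by norm_num) ?_)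
    nlinarith
  -- orderings
  have b0inv : b0⁻¹ = (p + 1/t1) - b0 :=
    inv_eq_of_mul_eq_one_right (by linear_combination -b0q)
  have a1inv : a1⁻¹ = (p + t1) - a1 :=
    inv_eq_of_mul_eq_one_right (by linear_combination -a1q)
  have order1 : wh < b0 := by
    by_contra hcon
    push_neg at hcon
    have := mono_aux b0pos hcon (le_of_lt wh1)
    rw [whinv, b0inv] at this
    linarith
  have order2 : b0 < a1 := by
    by_contra hcon
    push_neg at hcon
    have := mono_aux a1pos hcon (le_of_lt b0lt1)
    rw [b0inv, a1inv] at this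
    linarith
  have order3 : a1 < 1/p := by
    by_contra hcon
    push_neg at hcon
    have hp1lt : 1/p < 1 := by
      rw [div_lt_iff₀ hp0]; linarith
    have hppos : 0 < 1/p := by positivity
    have := mono_aux hppos hcon (le_of_lt a1lt1)
    rw [a1inv] at this
    have hpi : (1/p)⁻¹ = p := by field_simp
    rw [hpi] at this
    have : p + t1 ≤ 1/p + p := by linarith
    have h2 : t1 ≤ 1/p := by linarith
    rw [le_div_iff₀ hp0] at h2
    linarith
  exact ⟨wh, t1, a1, b0, ⟨hp732, hp2, hp3, whpos, wh1, whq', whlow, whlt,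
    t1pos, t1le, t1q, t1gt, t1lt1, a1pos, a1lt1, a1q, b0pos, b0le, b0lt1, b0q,
    order1, order2, order3⟩⟩

end

end LY13

namespace LY13

noncomputable section
open Set

lemma fm_of_root (p s x : ℝ) (hq : x^2 - s*x + 1 = 0) : fm p x = s - p := by
  have hinv : x⁻¹ = s - x := inv_eq_of_mul_eq_one_right (by linear_combination -hq)
  unfold fm
  rw [hinv]
  ring

variable {p wh t1 a1 b0 : ℝ}

namespace Pfacts

variable (P : Pfacts p wh t1 a1 b0)
include P

lemma hp0 : 0 < p := by have := P.hp732; linarith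
lemma t2q : (1/t1)^2 - (p+wh)*(1/t1) + 1 = 0 := by
  have h0 : t1 ≠ 0 := ne_of_gt P.t1pos
  have key : (1/t1)^2 - (p+wh)*(1/t1) + 1 = (t1^2 - (p+wh)*t1 + 1)/t1^2 := by
    field_simp
    ring
  rw [key, P.t1q, zero_div]
lemma t2gt1 : 1 < 1/t1 := by
  rw [lt_div_iff₀ P.t1pos]; simpa using P.t1lt1

lemma fm_wh : fm p wh = p := by
  have := fm_of_root p (2*p) wh (by linear_combination P.whq)
  rw [this]; ring
lemma fm_p : fm p p = 1/p := by
  unfold fm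
  rw [inv_eq_one_div]
  ring
lemma fm_b0 : fm p b0 = 1/t1 := by
  have := fm_of_root p (p + 1/t1) b0 P.b0q
  rw [this]; ring
lemma fm_t2 : fm p (1/t1) = wh := by
  have := fm_of_root p (p + wh) (1/t1) P.t2q
  rw [this]; ring
lemma fm_a1 : fm p a1 = t1 := by
  have := fm_of_root p (p + t1) a1 P.a1q
  rw [this]; ring
lemma fm_t1 : fm p t1 = wh := by
  have := fm_of_root p (p + wh) t1 P.t1q
  rw [this]; ring
lemma fm_invp : fm p (1/p) = 1/p := by
  have hp := P.hp0
  unfold fm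
  rw [one_div, inv_inv]
  ring

lemma gm_wh : gm p wh = 1/p := by unfold gm; rw [P.fm_wh, P.fm_p]
lemma gm_b0 : gm p b0 = wh := by unfold gm; rw [P.fm_b0, P.fm_t2]
lemma gm_a1 : gm p a1 = wh := by unfold gm; rw [P.fm_a1, P.fm_t1]
lemma gm_invp : gm p (1/p) = 1/p := by unfold gm; rw [P.fm_invp, P.fm_invp]

lemma invp_lt1 : 1/p < 1 := by
  rw [div_lt_iff₀ P.hp0]; have := P.hp732; linarith

/-- On `[wh, 1/p]`, `fm p` is bounded above by `p`. -/
lemma fm_le_p {u : ℝ} (hu : wh ≤ u) (hu2 : u ≤ 1/p) : fm p u ≤ p := by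
  have h1 : u ≤ 1 := le_of_lt (lt_of_le_of_lt hu2 P.invp_lt1)
  have h2 := mono_aux P.whpos hu h1
  have hinv : wh⁻¹ = 2*p - wh := inv_eq_of_mul_eq_one_right (by linear_combination -P.whq)
  rw [hinv] at h2
  unfold fm
  linarith

/-- On `[wh, b0]`, `fm p` is bounded below by `1/t1`. -/
lemma fm_ge_t2 {u : ℝ} (hu : wh ≤ u) (hu2 : u ≤ b0) : 1/t1 ≤ fm p u := by
  have hu0 : 0 < u := lt_of_lt_of_le P.whpos hu
  have h2 := mono_aux hu0 hu2 (le_of_lt P.b0lt1)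
  have hinv : b0⁻¹ = (p + 1/t1) - b0 := inv_eq_of_mul_eq_one_right (by linear_combination -P.b0q)
  rw [hinv] at h2
  unfold fm
  linarith

/-- On `[a1, 1/p]`, `fm p` is bounded above by `t1`. -/
lemma fm_le_t1 {u : ℝ} (hu : a1 ≤ u) (hu2 : u ≤ 1/p) : fm p u ≤ t1 := by
  have h1 : u ≤ 1 := le_of_lt (lt_of_le_of_lt hu2 P.invp_lt1)
  have h2 := mono_aux P.a1pos hu h1
  have hinv : a1⁻¹ = (p + t1) - a1 := inv_eq_of_mul_eq_one_right (by linear_combination -P.a1q)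
  rw [hinv] at h2
  unfold fm
  linarith

/-- On `(0, 1/p]`, `fm p` is bounded below by `1/p`. -/
lemma fm_ge_invp {u : ℝ} (hu : 0 < u) (hu2 : u ≤ 1/p) : 1/p ≤ fm p u := by
  have hp0 := P.hp0
  have h2 := mono_aux hu hu2 (le_of_lt P.invp_lt1)
  have hinv : (1/p)⁻¹ = p := by rw [one_div, inv_inv]
  rw [hinv] at h2
  unfold fm
  linarith

/-- Expansion on the branch `[wh, b0]`. -/
lemma expand0 {u v : ℝ} (hu1 : wh ≤ u) (hu2 : u ≤ b0) (hv1 : wh ≤ v) (hv2 : v ≤ b0) :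
    (51/50) * |u - v| ≤ |gm p u - gm p v| := by
  have hu0 : 0 < u := lt_of_lt_of_le P.whpos hu1
  have hv0 : 0 < v := lt_of_lt_of_le P.whpos hv1
  have hfu := P.fm_ge_t2 hu1 hu2
  have hfv := P.fm_ge_t2 hv1 hv2
  have ht2 := P.t2gt1
  have hfu1 : 1 < fm p u := lt_of_lt_of_le ht2 hfu
  have hfv1 : 1 < fm p v := lt_of_lt_of_le ht2 hfv
  have hfu0 : (0:ℝ) < fm p u := by linarith
  have hfv0 : (0:ℝ) < fm p v := by linarith
  set X := u * v with hX
  set Y := fm p u * fm p v with hY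
  have hX0 : 0 < X := mul_pos hu0 hv0
  have hY1 : 1 < Y := by nlinarith
  have hY0 : 0 < Y := by linarith
  have hXle : X ≤ 9409/62500 := by
    have h1 : u ≤ 97/250 := le_trans hu2 P.b0le
    have h2 : v ≤ 97/250 := le_trans hv2 P.b0le
    nlinarith
  -- 1 ≤ t1² Y
  have ht1u : 1 ≤ t1 * fm p u := by
    have h := mul_le_mul_of_nonneg_left hfu (le_of_lt P.t1pos)
    rwa [mul_one_div_cancel (ne_of_gt P.t1pos)] at h
  have ht1v : 1 ≤ t1 * fm p v := by
    have h := mul_le_mul_of_nonneg_left hfv (le_of_lt P.t1pos)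
    rwa [mul_one_div_cancel (ne_of_gt P.t1pos)] at h
  have hYt : 1 ≤ t1^2 * Y := by nlinarith
  have key : gm p u - gm p v =
      (u - v) * ((u*v - 1)/(u*v)) * ((fm p u * fm p v - 1)/(fm p u * fm p v)) := by
    unfold gm
    rw [fm_diff p (ne_of_gt hfu0) (ne_of_gt hfv0), fm_diff p (ne_of_gt hu0) (ne_of_gt hv0)]
  rw [key, abs_mul, abs_mul]
  have hA : |(u*v - 1)/(u*v)| = (1 - X)/X := by
    rw [abs_div, abs_of_pos hX0, abs_of_neg (by nlinarith : u*v - 1 < 0)]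
    ring_nf
    rw [hX]
  have hB : |(fm p u * fm p v - 1)/(fm p u * fm p v)| = (Y - 1)/Y := by
    rw [abs_div, abs_of_pos hY0, abs_of_pos (by nlinarith : (0:ℝ) < fm p u * fm p v - 1)]
  rw [hA, hB]
  have hfactor : 51/50 ≤ (1 - X)/X * ((Y - 1)/Y) := by
    rw [div_mul_div_comm, le_div_iff₀ (mul_pos hX0 hY0)]
    have ht1le := P.t1le
    nlinarith [hYt, hXle, hY0, hX0, mul_pos hX0 hY0]
  calc (51/50) * |u - v| ≤ ((1-X)/X * ((Y-1)/Y)) * |u - v| :=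
      mul_le_mul_of_nonneg_right hfactor (abs_nonneg _)
    _ = |u - v| * ((1-X)/X) * ((Y-1)/Y) := by ring

/-- Expansion on the branch `[a1, 1/p]`. -/
lemma expand1 {u v : ℝ} (hu1 : a1 ≤ u) (hu2 : u ≤ 1/p) (hv1 : a1 ≤ v) (hv2 : v ≤ 1/p) :
    (51/50) * |u - v| ≤ |gm p u - gm p v| := by
  have hp0 := P.hp0
  have hu0 : 0 < u := lt_of_lt_of_le P.a1pos hu1
  have hv0 : 0 < v := lt_of_lt_of_le P.a1pos hv1
  have hfu := P.fm_le_t1 hu1 hu2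
  have hfv := P.fm_le_t1 hv1 hv2
  have hfu0 : 0 < fm p u := lt_of_lt_of_le (by positivity) (P.fm_ge_invp hu0 hu2)
  have hfv0 : 0 < fm p v := lt_of_lt_of_le (by positivity) (P.fm_ge_invp hv0 hv2)
  set X := u * v with hX
  set Y := fm p u * fm p v with hY
  have hX0 : 0 < X := mul_pos hu0 hv0
  have hY0 : 0 < Y := mul_pos hfu0 hfv0
  have hupl : u * p ≤ 1 := by
    rw [← le_div_iff₀ hp0]; linarith [hu2]
  have hvpl : v * p ≤ 1 := by
    rw [← le_div_iff₀ hp0]; linarith [hv2]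
  have hXp : X * p^2 ≤ 1 := by
    have h := mul_le_mul hupl hvpl (by positivity) (by norm_num : (0:ℝ) ≤ 1)
    nlinarith [h]
  have hYle : Y ≤ 6561/10000 := by
    have h1 : t1 ≤ 81/100 := P.t1le
    nlinarith [P.t1pos]
  have hY1 : Y < 1 := by nlinarith
  have hX1 : X < 1 := by nlinarith [P.hp3]
  have key : gm p u - gm p v =
      (u - v) * ((u*v - 1)/(u*v)) * ((fm p u * fm p v - 1)/(fm p u * fm p v)) := by
    unfold gm
    rw [fm_diff p (ne_of_gt hfu0) (ne_of_gt hfv0), fm_diff p (ne_of_gt hu0) (ne_of_gt hv0)]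
  rw [key, abs_mul, abs_mul]
  have hA : |(u*v - 1)/(u*v)| = (1 - X)/X := by
    rw [abs_div, abs_of_pos hX0, abs_of_neg (by nlinarith : u*v - 1 < 0)]
    ring_nf
    rw [hX]
  have hB : |(fm p u * fm p v - 1)/(fm p u * fm p v)| = (1 - Y)/Y := by
    rw [abs_div, abs_of_pos hY0, abs_of_neg (by nlinarith : fm p u * fm p v - 1 < 0)]
    ring_nf
    rw [hY]
  rw [hA, hB]
  have hX3 : 3 * X ≤ 1 := by nlinarith [P.hp3, mul_nonneg (le_of_lt hX0) (by linarith [P.hp3] : (0:ℝ) ≤ p^2 - 3)]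
  have hfactor : 51/50 ≤ (1 - X)/X * ((1 - Y)/Y) := by
    rw [div_mul_div_comm, le_div_iff₀ (mul_pos hX0 hY0)]
    nlinarith [mul_le_mul_of_nonneg_right hX3 (le_of_lt hY0)]
  calc (51/50) * |u - v| ≤ ((1-X)/X * ((1-Y)/Y)) * |u - v| :=
      mul_le_mul_of_nonneg_right hfactor (abs_nonneg _)
    _ = |u - v| * ((1-X)/X) * ((1-Y)/Y) := by ring

lemma fm_contAt {x : ℝ} (hx : x ≠ 0) : ContinuousAt (fm p) x := by
  unfold fm
  exact ((continuousAt_id.sub continuousAt_const).add (continuousAt_inv₀ hx))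

lemma fm_pos {x : ℝ} (hx : 0 < x) : 0 < fm p x := by
  have := fm_ge p hx
  have := P.hp2
  linarith

lemma gm_contOn {lo hi : ℝ} (hlo : 0 < lo) : ContinuousOn (gm p) (Icc lo hi) := by
  intro x hx
  have hx0 : 0 < x := lt_of_lt_of_le hlo hx.1
  have hfx0 : 0 < fm p x := P.fm_pos hx0
  exact ((P.fm_contAt (ne_of_gt hfx0)).comp (P.fm_contAt (ne_of_gt hx0))).continuousWithinAt

lemma pre_exists0 : ∀ y ∈ Icc wh (1/p), ∃ x ∈ Icc wh b0, gm p x = y := by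
  intro y hy
  have hsub : Icc wh (1/p) ⊆ gm p '' Icc wh b0 := by
    have h1 := intermediate_value_Icc' (le_of_lt P.order1) (P.gm_contOn P.whpos)
    rwa [P.gm_b0, P.gm_wh] at h1
  obtain ⟨x, hx, hgx⟩ := hsub hy
  exact ⟨x, hx, hgx⟩

lemma pre_exists1 : ∀ y ∈ Icc wh (1/p), ∃ x ∈ Icc a1 (1/p), gm p x = y := by
  intro y hy
  have ha1p : a1 ≤ 1/p := le_of_lt P.order3
  have hsub : Icc wh (1/p) ⊆ gm p '' Icc a1 (1/p) := by
    have h1 := intermediate_value_Icc ha1p (P.gm_contOn P.a1pos)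
    rwa [P.gm_a1, P.gm_invp] at h1
  obtain ⟨x, hx, hgx⟩ := hsub hy
  exact ⟨x, hx, hgx⟩

/-- Inverse branch function. -/
def hfun (j : Bool) (y : ℝ) : ℝ :=
  if hy : y ∈ Icc wh (1/p) then
    (if j then (P.pre_exists1 y hy).choose else (P.pre_exists0 y hy).choose)
  else wh

lemma hfun_spec0 (y : ℝ) (hy : y ∈ Icc wh (1/p)) :
    wh ≤ P.hfun false y ∧ P.hfun false y ≤ b0 ∧ gm p (P.hfun false y) = y := by
  unfold hfun
  rw [dif_pos hy]
  simp only [Bool.false_eq_true, if_false]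
  exact ⟨(P.pre_exists0 y hy).choose_spec.1.1, (P.pre_exists0 y hy).choose_spec.1.2,
    (P.pre_exists0 y hy).choose_spec.2⟩

lemma hfun_spec1 (y : ℝ) (hy : y ∈ Icc wh (1/p)) :
    a1 ≤ P.hfun true y ∧ P.hfun true y ≤ 1/p ∧ gm p (P.hfun true y) = y := by
  unfold hfun
  rw [dif_pos hy]
  simp only [if_true]
  exact ⟨(P.pre_exists1 y hy).choose_spec.1.1, (P.pre_exists1 y hy).choose_spec.1.2,
    (P.pre_exists1 y hy).choose_spec.2⟩

/-- The concrete horseshoe. -/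
def horseshoe : Horseshoe (gm p) where
  k1 := wh
  k2 := 1/p
  A := fun j => if j then a1 else wh
  B := fun j => if j then 1/p else b0
  r := 50/51
  hr0 := by norm_num
  hr1 := by norm_num
  hk := le_of_lt P.whlt
  hsub1 := by
    intro j
    cases j with
    | false => simp
    | true => simpa using le_of_lt (lt_trans P.order1 P.order2)
  hsub2 := by
    intro j
    cases j with
    | false => simpa using le_of_lt P.order1
    | true => simpa using le_of_lt P.order3
  hsub3 := by
    intro j
    cases j with
    | false => simpa using le_of_lt (lt_trans P.order2 P.order3)
    | true => simp
  hgap := by simpa using P.order2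
  h := P.hfun
  hmem1 := by
    intro j y hy1 hy2
    cases j with
    | false => exact (P.hfun_spec0 y ⟨hy1, hy2⟩).1
    | true => exact (P.hfun_spec1 y ⟨hy1, hy2⟩).1
  hmem2 := by
    intro j y hy1 hy2
    cases j with
    | false => exact (P.hfun_spec0 y ⟨hy1, hy2⟩).2.1
    | true => exact (P.hfun_spec1 y ⟨hy1, hy2⟩).2.1
  hinv := by
    intro j y hy1 hy2
    cases j with
    | false => exact (P.hfun_spec0 y ⟨hy1, hy2⟩).2.2
    | true => exact (P.hfun_spec1 y ⟨hy1, hy2⟩).2.2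
  hlip := by
    intro j y y' hy1 hy2 hy1' hy2'
    cases j with
    | false =>
      obtain ⟨ha, hb, hval⟩ := P.hfun_spec0 y ⟨hy1, hy2⟩
      obtain ⟨ha', hb', hval'⟩ := P.hfun_spec0 y' ⟨hy1', hy2'⟩
      have hexp := P.expand0 ha hb ha' hb'
      rw [hval, hval'] at hexp
      linarith
    | true =>
      obtain ⟨ha, hb, hval⟩ := P.hfun_spec1 y ⟨hy1, hy2⟩
      obtain ⟨ha', hb', hval'⟩ := P.hfun_spec1 y' ⟨hy1', hy2'⟩
      have hexp := P.expand1 ha hb ha' hb'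
      rw [hval, hval'] at hexp
      linarith

end Pfacts

end

end LY13

namespace LY13

/-- Symbol sequence associated to `t : ℕ → Bool`: value `t ((√n).unpair.1)` at perfect
squares `n`, `false` elsewhere. -/
def code (t : ℕ → Bool) (n : ℕ) : Bool :=
  if n.sqrt * n.sqrt = n then t (n.sqrt).unpair.1 else false

lemma code_sq (t : ℕ → Bool) (m : ℕ) : code t (m*m) = t m.unpair.1 := by
  simp [code, Nat.sqrt_eq]

lemma code_nonsq (t : ℕ → Bool) {n m : ℕ} (h1 : m*m < n) (h2 : n < (m+1)*(m+1)) :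
    code t n = false := by
  have hs : n.sqrt = m := by
    have ha : m ≤ n.sqrt := Nat.le_sqrt.2 (le_of_lt h1)
    have hb : n.sqrt < m + 1 := Nat.sqrt_lt.2 h2
    omega
  have : n.sqrt * n.sqrt ≠ n := by rw [hs]; omega
  simp [code, this]

lemma code_diff {t t' : ℕ → Bool} (h : t ≠ t') (N : ℕ) :
    ∃ n, N ≤ n ∧ code t n ≠ code t' n := by
  obtain ⟨i, hi⟩ := Function.ne_iff.1 h
  set m := Nat.pair i (N+1) with hm
  have hm1 : N + 1 ≤ m := Nat.right_le_pair _ _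
  refine ⟨m*m, ?_, ?_⟩
  · calc N ≤ m := by omega
      _ ≤ m*m := Nat.le_mul_of_pos_left m (by omega)
  · rw [code_sq, code_sq, hm, Nat.unpair_pair]
    exact hi

lemma code_agree (L N : ℕ) :
    ∃ k, N ≤ k ∧ ∀ (t t' : ℕ → Bool), ∀ i, i < L → code t (k+i) = code t' (k+i) := by
  set m := L + N + 1 with hm
  refine ⟨m*m + 1, ?_, ?_⟩
  · nlinarith [hm]
  · intro t t' i hi
    have h1 : m*m < m*m + 1 + i := by omega
    have h2 : m*m + 1 + i < (m+1)*(m+1) := by nlinarith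
    rw [code_nonsq t h1 h2, code_nonsq t' h1 h2]

end LY13

namespace LY13

open Filter Set

lemma uncountable_seq : Uncountable (ℕ → Bool) := by
  rw [← not_countable_iff]
  intro h
  obtain ⟨f, hf⟩ := exists_surjective_nat (ℕ → Bool)
  obtain ⟨n, hn⟩ := hf (fun k => !(f k k))
  have := congrFun hn n
  simp at this

lemma gm_eq_iter2 (p : ℝ) : gm p = (fm p)^[2] := by
  funext w
  rfl

lemma iter_two_mul (p : ℝ) (k : ℕ) (x : ℝ) : (fm p)^[2*k] x = (gm p)^[k] x := by
  rw [gm_eq_iter2, ← Function.iterate_mul]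

lemma sqrt_ge_abs_left (a b : ℝ) : |a| ≤ Real.sqrt (a^2 + b^2) := by
  rw [← Real.sqrt_sq_eq_abs]
  apply Real.sqrt_le_sqrt
  nlinarith [sq_nonneg b]

lemma sqrt_le_abs_add (a b : ℝ) : Real.sqrt (a^2 + b^2) ≤ |a| + |b| := by
  rw [← Real.sqrt_sq (by positivity : (0:ℝ) ≤ |a| + |b|)]
  apply Real.sqrt_le_sqrt
  nlinarith [sq_abs a, sq_abs b, mul_nonneg (abs_nonneg a) (abs_nonneg b)]

lemma sqrt_le_one_add_C (a b C : ℝ) (hC : 0 ≤ C) (hab : |b| ≤ C * |a|) :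
    Real.sqrt (a^2 + b^2) ≤ (1 + C) * |a| := by
  rw [← Real.sqrt_sq (by positivity : (0:ℝ) ≤ (1 + C) * |a|)]
  apply Real.sqrt_le_sqrt
  have h1 : (|b|) * (|b|) ≤ (C*(|a|))*(C*(|a|)) := mul_self_le_mul_self (abs_nonneg b) hab
  nlinarith [sq_abs a, sq_abs b, abs_nonneg a, h1,
    mul_nonneg hC (mul_nonneg (abs_nonneg a) (abs_nonneg a))]

section Planar

variable (b c a' b' c' a'' b'' c'' q : ℝ)

/-- One-step formula: the planar map takes a point with `x + b·y + c = w ≠ 0` to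
`(w, b'/b'' + 1/(b·w))`. -/
lemma step_formula (hb : b ≠ 0) (hb'' : b'' ≠ 0)
    (h1 : a' * b = b') (h2 : a'' * b = b'') (h3 : b'' * c = b * c'')
    (h4 : b'' = b * (b * c' - b' * c))
    (v : ℝ × ℝ) (w : ℝ) (hw : v.1 + b * v.2 + c = w) (hw0 : w ≠ 0) :
    sysStep b c a' b' c' a'' b'' c'' v = (w, b'/b'' + 1/(b*w)) := by
  have ha'' : a'' ≠ 0 := by
    intro h0
    rw [h0, zero_mul] at h2
    exact hb'' h2.symm
  have hc2 : c'' = a'' * c := by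
    have h := h3
    rw [← h2] at h
    have h5 : b * (a'' * c) = b * c'' := by linear_combination h
    exact (mul_left_cancel₀ hb h5).symm
  have hden : a'' * v.1 + b'' * v.2 + c'' = a'' * w := by
    rw [← h2, hc2, ← hw]
    ring
  have hcp : b * c' = a'' + a' * b * c := by
    have h5 : a''*b = b * (b * c' - (a'*b) * c) := by rw [h1, ← h4, ← h2]
    have h6 : b * (b * c' - (a' * b * c + a'')) = 0 := by linear_combination -h5
    have h7 := mul_eq_zero.1 h6
    rcases h7 with h7 | h7
    · exact absurd h7 hb
    · linear_combination h7
  have hbb'' : b * b'' ≠ 0 := mul_ne_zero hb hb''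
  unfold sysStep
  rw [Prod.ext_iff]
  refine ⟨by simpa using hw, ?_⟩
  simp only
  rw [hden, div_eq_iff (mul_ne_zero ha'' hw0)]
  -- a' v.1 + b' v.2 + c' = (b'/b'' + 1/(b*w)) * (a''*w)
  have key : b*b''*(a' * v.1 + b' * v.2 + c') = b*b''*((b'/b'' + 1/(b*w)) * (a''*w)) := by
    have hrhs : b*b''*((b'/b'' + 1/(b*w)) * (a''*w)) = b*b'*a''*w + a''*b'' := by
      field_simp
    rw [hrhs, ← hw, ← h1, ← h2]
    linear_combination (a''*b) * hcp
  exact mul_left_cancel₀ hbb'' key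

/-- The full orbit formula for an initial point `(0, (w0 - c)/b)`. -/
lemma orbit_formula (hb : b ≠ 0) (hb'' : b'' ≠ 0)
    (h1 : a' * b = b') (h2 : a'' * b = b'') (h3 : b'' * c = b * c'')
    (h4 : b'' = b * (b * c' - b' * c))
    (hq : q = c + b * b' / b'') (hq1 : -2 < q)
    (w0 : ℝ) (hw0 : 0 < w0) :
    ∀ n, (sysStep b c a' b' c' a'' b'' c'')^[n+1] (0, (w0 - c)/b) =
      ((fm (-q))^[n] w0, b'/b'' + 1/(b * (fm (-q))^[n] w0)) := by
  have hpos : ∀ n, 0 < (fm (-q))^[n] w0 := by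
    intro n
    induction n with
    | zero => simpa using hw0
    | succ n ih =>
      rw [Function.iterate_succ_apply']
      have := fm_ge (-q) ih
      linarith
  have hinv : ∀ x : ℝ, x ≠ 0 → x + b * (b'/b'' + 1/(b*x)) + c = fm (-q) x := by
    intro x hx
    unfold fm
    rw [hq]
    field_simp
    ring
  intro n
  induction n with
  | zero =>
    rw [Function.iterate_one]
    apply step_formula b c a' b' c' a'' b'' c'' hb hb'' h1 h2 h3 h4
    · simp only
      field_simp
      simp
    · simpa using ne_of_gt hw0
  | succ n ih =>
    rw [Function.iterate_succ_apply', ih]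
    have hx0 : (fm (-q))^[n] w0 ≠ 0 := ne_of_gt (hpos n)
    have hstep := step_formula b c a' b' c' a'' b'' c'' hb hb'' h1 h2 h3 h4
      ((fm (-q))^[n] w0, b'/b'' + 1/(b * (fm (-q))^[n] w0))
      (fm (-q) ((fm (-q))^[n] w0))
      (hinv _ hx0) (ne_of_gt (by
        have := fm_ge (-q) (hpos n)
        linarith))
    rw [hstep, Function.iterate_succ_apply']

end Planar

end LY13

open Filter

set_option maxHeartbeats 2000000

/-- Under hypotheses (H) with `−2 < q < −√3`, the system exhibits Li–Yorke
chaos: there is an uncountable set `S` of initial points with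
`x₀ + b·y₀ + c > 0`, whose orbits are well-defined and bounded, and such that
any two distinct orbits from `S` have Euclidean distance with strictly
positive limsup and zero liminf. -/
theorem stmt_13 (a b c a' b' c' a'' b'' c'' q : ℝ)
    (hb : b ≠ 0) (hb'' : b'' ≠ 0)
    (hnt1 : |a'| + |a''| > 0) (hnt2 : |a''| + |b''| > 0)
    (hnt3 : |a'| + |b'| + |c'| > 0)
    (ha : a = 1) (h1 : a' * b = b') (h2 : a'' * b = b'') (h3 : b'' * c = b * c'')
    (h4 : b'' = b * (b * c' - b' * c))
    (hq : q = c + b * b' / b'') (hq1 : -2 < q) (hq2 : q < -Real.sqrt 3) :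
    ∃ S : Set (ℝ × ℝ), ¬ S.Countable ∧
      (∀ p ∈ S, p.1 + b * p.2 + c > 0) ∧
      (∀ p ∈ S, ∀ n : ℕ,
        a'' * ((sysStep b c a' b' c' a'' b'' c'')^[n] p).1 +
          b'' * ((sysStep b c a' b' c' a'' b'' c'')^[n] p).2 + c'' ≠ 0) ∧
      (∀ p ∈ S, ∃ M : ℝ, ∀ n : ℕ,
        |((sysStep b c a' b' c' a'' b'' c'')^[n] p).1| ≤ M ∧
        |((sysStep b c a' b' c' a'' b'' c'')^[n] p).2| ≤ M) ∧
      (∀ u ∈ S, ∀ v ∈ S, u ≠ v →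
        0 < Filter.limsup
            (fun n : ℕ => Real.sqrt
              ((((sysStep b c a' b' c' a'' b'' c'')^[n] u).1 -
                  ((sysStep b c a' b' c' a'' b'' c'')^[n] v).1) ^ 2 +
               (((sysStep b c a' b' c' a'' b'' c'')^[n] u).2 -
                  ((sysStep b c a' b' c' a'' b'' c'')^[n] v).2) ^ 2))
            Filter.atTop ∧
        Filter.liminf
            (fun n : ℕ => Real.sqrt
              ((((sysStep b c a' b' c' a'' b'' c'')^[n] u).1 -
                  ((sysStep b c a' b' c' a'' b'' c'')^[n] v).1) ^ 2 +
               (((sysStep b c a' b' c' a'' b'' c'')^[n] u).2 -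
                  ((sysStep b c a' b' c' a'' b'' c'')^[n] v).2) ^ 2))
            Filter.atTop = 0) := by
  classical
  haveI : Uncountable (ℕ → Bool) := LY13.uncountable_seq
  set F := sysStep b c a' b' c' a'' b'' c'' with hF
  have hp1 : Real.sqrt 3 < -q := by linarith
  have hp2 : (-q) < 2 := by linarith
  obtain ⟨wh, t1, a1, b0, P⟩ := LY13.pfacts_exists hp1 hp2
  set p : ℝ := -q with hpdef
  set H := P.horseshoe with hHdef
  have hwh0 : 0 < wh := P.whpos
  have hp0 : 0 < p := P.hp0
  have hinvp1 : 1/p < 1 := P.invp_lt1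
  have hwhlt : wh < 1/p := P.whlt
  have hgap : 0 < a1 - b0 := by linarith [P.order2]
  have ha'' : a'' ≠ 0 := by
    intro h0
    rw [h0, zero_mul] at h2
    exact hb'' h2.symm
  have hc2 : c'' = a'' * c := by
    have h := h3
    rw [← h2] at h
    have h5 : b * (a'' * c) = b * c'' := by linear_combination h
    exact (mul_left_cancel₀ hb h5).symm
  have hdenom : ∀ x y : ℝ, a''*x + b''*y + c'' = a''*(x + b*y + c) := by
    intro x y
    rw [← h2, hc2]
    ring
  have hinvariant : ∀ x : ℝ, x ≠ 0 → x + b * (b'/b'' + 1/(b*x)) + c = LY13.fm p x := by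
    intro x hx
    unfold LY13.fm
    rw [hpdef, hq]
    field_simp
    ring
  -- the symbolic set
  set X : (ℕ → Bool) → ℝ := fun t => H.pt (LY13.code t) with hX
  set Φ : (ℕ → Bool) → ℝ × ℝ := fun t => ((0:ℝ), (X t - c)/b) with hΦ
  have hXmem : ∀ t, wh ≤ X t ∧ X t ≤ 1/p := fun t => H.pt_mem (LY13.code t)
  have hX0 : ∀ t, 0 < X t := fun t => lt_of_lt_of_le hwh0 (hXmem t).1
  have horb : ∀ t n, F^[n+1] (Φ t) =
      ((LY13.fm p)^[n] (X t), b'/b'' + 1/(b * (LY13.fm p)^[n] (X t))) := by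
    intro t n
    have h := LY13.orbit_formula b c a' b' c' a'' b'' c'' q hb hb'' h1 h2 h3 h4 hq hq1
      (X t) (hX0 t) n
    rw [hF, hΦ]
    exact h
  have hwe : ∀ t k, (LY13.fm p)^[2*k] (X t) = H.pt (fun i => LY13.code t (i+k)) := by
    intro t k
    rw [LY13.iter_two_mul, hX]
    exact H.g_iter_pt k (LY13.code t)
  have hwmem : ∀ t k, wh ≤ (LY13.fm p)^[2*k] (X t) ∧ (LY13.fm p)^[2*k] (X t) ≤ 1/p := by
    intro t k
    rw [hwe]
    exact H.pt_mem _
  have hwpos : ∀ t n, 0 < (LY13.fm p)^[n] (X t) := by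
    intro t n
    induction n with
    | zero => simpa using hX0 t
    | succ n ih =>
      rw [Function.iterate_succ_apply']
      have := LY13.fm_ge p ih
      linarith
  have hwlb : ∀ t n, 2 - p ≤ (LY13.fm p)^[n] (X t) := by
    intro t n
    cases n with
    | zero =>
      have := (hXmem t).1
      have := P.whlow
      simpa using by linarith
    | succ n =>
      rw [Function.iterate_succ_apply']
      exact LY13.fm_ge p (hwpos t n)
  have hwub : ∀ t n, (LY13.fm p)^[n] (X t) ≤ p := by
    intro t n
    rcases Nat.even_or_odd n with ⟨k, hk⟩ | ⟨k, hk⟩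
    · subst hk
      rw [show k + k = 2*k by ring]
      have := (hwmem t k).2
      have : 1/p ≤ p := by
        rw [div_le_iff₀ hp0]
        nlinarith [P.hp3]
      linarith [(hwmem t k).2]
    · subst hk
      rw [show 2*k + 1 = (2*k) + 1 by ring, Function.iterate_succ_apply']
      exact P.fm_le_p (hwmem t k).1 (hwmem t k).2
  -- separation / closeness of symbolic orbits
  have hsep : ∀ t t' k, LY13.code t k ≠ LY13.code t' k →
      a1 - b0 ≤ |(LY13.fm p)^[2*k] (X t) - (LY13.fm p)^[2*k] (X t')| := by
    intro t t' k hk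
    rw [hwe, hwe]
    have := H.pt_apart (fun i => LY13.code t (i+k)) (fun i => LY13.code t' (i+k))
      (by simpa using hk)
    exact this
  have hclose : ∀ t t' k L, (∀ i, i < L → LY13.code t (k+i) = LY13.code t' (k+i)) →
      |(LY13.fm p)^[2*k] (X t) - (LY13.fm p)^[2*k] (X t')| ≤ (50/51)^L * (1/p - wh) := by
    intro t t' k L hagree
    rw [hwe, hwe]
    have := H.pt_close L (fun i => LY13.code t (i+k)) (fun i => LY13.code t' (i+k))
      (fun i hi => by simpa [Nat.add_comm] using hagree i hi)
    exact this
  -- injectivity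
  have hXinj : Function.Injective X := by
    intro t t' hEq
    by_contra hne
    obtain ⟨k, _, hk⟩ := LY13.code_diff hne 0
    have h := hsep t t' k hk
    rw [hEq, sub_self, abs_zero] at h
    linarith
  have hΦinj : Function.Injective Φ := by
    intro t t' h
    apply hXinj
    have h2' := congrArg Prod.snd h
    simp only [hΦ] at h2'
    field_simp at h2'
    linarith
  -- invariants along orbits
  have hInv : ∀ t n, (F^[n] (Φ t)).1 + b*(F^[n] (Φ t)).2 + c = (LY13.fm p)^[n] (X t) := by
    intro t n
    cases n with
    | zero =>
      simp only [Function.iterate_zero, id_eq, hΦ]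
      field_simp
      ring
    | succ n =>
      rw [horb t n]
      simp only
      rw [hinvariant _ (ne_of_gt (hwpos t n)), Function.iterate_succ_apply']
  -- orbit bounds
  have hMy : 0 < 2 - p := by linarith
  have habs : (0:ℝ) < |b| := abs_pos.2 hb
  have horbBound : ∀ t n,
      |(F^[n] (Φ t)).1| ≤ p + (|b'/b''| + 1/((|b|) * (2-p))) + |(X t - c)/b| ∧
      |(F^[n] (Φ t)).2| ≤ p + (|b'/b''| + 1/((|b|) * (2-p))) + |(X t - c)/b| := by
    intro t n
    have hterm : (0:ℝ) ≤ |b'/b''| + 1/((|b|) * (2-p)) := by positivity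
    cases n with
    | zero =>
      have e1 : (F^[0] (Φ t)).1 = 0 := rfl
      have e2 : (F^[0] (Φ t)).2 = (X t - c)/b := rfl
      rw [e1, e2, abs_zero]
      have : (0:ℝ) ≤ p := le_of_lt hp0
      exact ⟨by positivity, by linarith [abs_nonneg ((X t - c)/b), le_abs_self ((X t - c)/b)]⟩
    | succ n =>
      set w := (LY13.fm p)^[n] (X t) with hw
      have e1 : (F^[n+1] (Φ t)).1 = w := by rw [horb t n]
      have e2 : (F^[n+1] (Φ t)).2 = b'/b'' + 1/(b*w) := by rw [horb t n]
      rw [e1, e2]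
      have hw0 : 0 < w := hwpos t n
      have hwp : w ≤ p := hwub t n
      have hwl : 2 - p ≤ w := hwlb t n
      constructor
      · rw [abs_of_pos hw0]
        linarith [abs_nonneg ((X t - c)/b)]
      · have key : |b'/b'' + 1/(b*w)| ≤ |b'/b''| + 1/((|b|) * (2-p)) := by
          have e1 : |1/(b*w)| = 1/((|b|) * w) := by
            rw [abs_div, abs_one, abs_mul, abs_of_pos hw0]
          have e2 : 1/((|b|) * w) ≤ 1/((|b|) * (2-p)) := by
            apply one_div_le_one_div_of_le
            · positivity
            · exact mul_le_mul_of_nonneg_left hwl (le_of_lt habs)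
          calc |b'/b'' + 1/(b*w)| ≤ |b'/b''| + |1/(b*w)| := abs_add_le _ _
            _ ≤ |b'/b''| + 1/((|b|) * (2-p)) := by rw [e1]; linarith
        have : (0:ℝ) ≤ p := le_of_lt hp0
        linarith [abs_nonneg ((X t - c)/b), key]
  refine ⟨Set.range Φ, ?_, ?_, ?_, ?_, ?_⟩
  · -- uncountable
    intro hc
    have hpre := hc.preimage hΦinj
    rw [Set.preimage_range] at hpre
    exact Set.not_countable_univ hpre
  · -- positivity of initial invariant
    rintro pt ⟨t, rfl⟩
    have h := hInv t 0
    simp only [Function.iterate_zero, id_eq] at h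
    rw [h]
    simpa using hX0 t
  · -- denominators nonzero
    rintro pt ⟨t, rfl⟩ n
    rw [hdenom, hInv t n]
    exact mul_ne_zero ha'' (ne_of_gt (hwpos t n))
  · -- boundedness
    rintro pt ⟨t, rfl⟩
    exact ⟨p + (|b'/b''| + 1/((|b|) * (2-p))) + |(X t - c)/b|, fun n => horbBound t n⟩
  · -- scrambling
    rintro u ⟨t, rfl⟩ v ⟨t', rfl⟩ huv
    have htne : t ≠ t' := fun h => huv (congrArg Φ h)
    set D : ℕ → ℝ := fun n => Real.sqrt
      (((F^[n] (Φ t)).1 - (F^[n] (Φ t')).1)^2 + ((F^[n] (Φ t)).2 - (F^[n] (Φ t')).2)^2)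
      with hD
    -- global bound on D
    set Mb : ℝ := p + (|b'/b''| + 1/((|b|) * (2-p))) + |(X t - c)/b| +
      (p + (|b'/b''| + 1/((|b|) * (2-p))) + |(X t' - c)/b|) with hMb
    have hDb : ∀ n, D n ≤ 2 * Mb := by
      intro n
      calc D n ≤ |(F^[n] (Φ t)).1 - (F^[n] (Φ t')).1| +
          |(F^[n] (Φ t)).2 - (F^[n] (Φ t')).2| := LY13.sqrt_le_abs_add _ _
        _ ≤ 2 * Mb := by
            have i1 := (horbBound t n).1
            have i2 := (horbBound t' n).1
            have i3 := (horbBound t n).2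
            have i4 := (horbBound t' n).2
            have j1 := abs_sub ((F^[n] (Φ t)).1) ((F^[n] (Φ t')).1)
            have j2 := abs_sub ((F^[n] (Φ t)).2) ((F^[n] (Φ t')).2)
            rw [hMb]
            linarith [abs_sub_abs_le_abs_sub ((F^[n] (Φ t)).1) ((F^[n] (Φ t')).1)]
    have hD0 : ∀ n, 0 ≤ D n := fun n => Real.sqrt_nonneg _
    have hbddAbove : IsBoundedUnder (· ≤ ·) atTop D := isBoundedUnder_of ⟨2*Mb, hDb⟩
    have hbddBelow : IsBoundedUnder (· ≥ ·) atTop D := isBoundedUnder_of ⟨0, hD0⟩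
    -- distance at odd times vs Δw
    set C : ℝ := 1/((|b|) * wh^2) with hC
    have hC0 : 0 ≤ C := by positivity
    have hDodd : ∀ k, |(LY13.fm p)^[2*k] (X t) - (LY13.fm p)^[2*k] (X t')| ≤ D (2*k+1) ∧
        D (2*k+1) ≤ (1 + C) * |(LY13.fm p)^[2*k] (X t) - (LY13.fm p)^[2*k] (X t')| := by
      intro k
      have e1 := horb t (2*k)
      have e2 := horb t' (2*k)
      set w1 := (LY13.fm p)^[2*k] (X t) with hw1
      set w2 := (LY13.fm p)^[2*k] (X t') with hw2
      have hw10 : wh ≤ w1 := (hwmem t k).1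
      have hw20 : wh ≤ w2 := (hwmem t' k).1
      have hw1p : 0 < w1 := lt_of_lt_of_le hwh0 hw10
      have hw2p : 0 < w2 := lt_of_lt_of_le hwh0 hw20
      have hDval : D (2*k+1) = Real.sqrt ((w1 - w2)^2 +
          ((b'/b'' + 1/(b*w1)) - (b'/b'' + 1/(b*w2)))^2) := by
        have f1 : (F^[2*k+1] (Φ t)).1 = w1 := by rw [e1]
        have f2 : (F^[2*k+1] (Φ t)).2 = b'/b'' + 1/(b*w1) := by rw [e1]
        have f3 : (F^[2*k+1] (Φ t')).1 = w2 := by rw [e2]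
        have f4 : (F^[2*k+1] (Φ t')).2 = b'/b'' + 1/(b*w2) := by rw [e2]
        rw [hD]
        simp only
        rw [f1, f2, f3, f4]
      have hyx : |(b'/b'' + 1/(b*w1)) - (b'/b'' + 1/(b*w2))| ≤ C * |w1 - w2| := by
        have heq : (b'/b'' + 1/(b*w1)) - (b'/b'' + 1/(b*w2)) = -(w1 - w2)/(b*w1*w2) := by
          field_simp
          ring
        rw [heq, abs_div, abs_neg]
        rw [hC]
        rw [div_le_iff₀ (by positivity : (0:ℝ) < |b*w1*w2|)]
        have hle : (|b|) * wh^2 ≤ |b*w1*w2| := by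
          rw [abs_mul, abs_mul, abs_of_pos hw1p, abs_of_pos hw2p]
          have : wh^2 ≤ w1 * w2 := by nlinarith
          calc (|b|) * wh^2 ≤ (|b|) * (w1*w2) := mul_le_mul_of_nonneg_left this (abs_nonneg b)
            _ = (|b|) * w1 * w2 := by ring
        have hpos : (0:ℝ) < (|b|) * wh^2 := by positivity
        calc |w1 - w2| = |w1 - w2| * 1 := by ring
          _ ≤ |w1 - w2| * (|b*w1*w2| / (|b| * wh^2)) := by
              apply mul_le_mul_of_nonneg_left _ (abs_nonneg _)
              rw [le_div_iff₀ hpos]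
              linarith
          _ = 1/((|b|) * wh^2) * |w1 - w2| * |b*w1*w2| := by
              field_simp
      constructor
      · rw [hDval]
        exact LY13.sqrt_ge_abs_left _ _
      · rw [hDval]
        exact LY13.sqrt_le_one_add_C _ _ C hC0 hyx
    constructor
    · -- limsup positive
      have hfreq : ∃ᶠ n in atTop, a1 - b0 ≤ D n := by
        rw [frequently_atTop]
        intro N
        obtain ⟨k, hkN, hk⟩ := LY13.code_diff htne N
        refine ⟨2*k+1, by omega, ?_⟩
        have := hsep t t' k hk
        linarith [(hDodd k).1]
      have := le_limsup_of_frequently_le hfreq hbddAbove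
      linarith
    · -- liminf zero
      have hlimlow : (0:ℝ) ≤ liminf D atTop := by
        apply le_liminf_of_le
        · exact isCoboundedUnder_ge_of_le atTop hDb
        · exact Eventually.of_forall hD0
      have hlimhigh : ∀ ε : ℝ, 0 < ε → liminf D atTop ≤ ε := by
        intro ε hε
        apply liminf_le_of_frequently_le _ hbddBelow
        rw [frequently_atTop]
        intro N
        have hD0' : (0:ℝ) < (1+C) * (1/p - wh + 1) :=
          mul_pos (by linarith) (by linarith)
        obtain ⟨L, hL⟩ := exists_pow_lt_of_lt_one (div_pos hε hD0')
          (by norm_num : (50:ℝ)/51 < 1)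
        obtain ⟨k, hkN, hagree⟩ := LY13.code_agree L N
        refine ⟨2*k+1, by omega, ?_⟩
        have hcl := hclose t t' k L (hagree t t')
        have hDle := (hDodd k).2
        have hpow0 : (0:ℝ) ≤ (50/51:ℝ)^L := by positivity
        have step1 : D (2*k+1) ≤ (1+C) * ((50/51)^L * (1/p - wh)) := by
          calc D (2*k+1) ≤ (1 + C) * |(LY13.fm p)^[2*k] (X t) - (LY13.fm p)^[2*k] (X t')| :=
              hDle
            _ ≤ (1+C) * ((50/51)^L * (1/p - wh)) :=
              mul_le_mul_of_nonneg_left hcl (by linarith)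
        have step2 : (1+C) * ((50/51)^L * (1/p - wh)) ≤ (1+C) * (1/p - wh + 1) * (50/51)^L := by
          have : (0:ℝ) ≤ 1 + C := by linarith
          nlinarith [hpow0, hwhlt]
        have step3 : (1+C) * (1/p - wh + 1) * (50/51)^L < ε := by
          have := (lt_div_iff₀ hD0').1 hL
          calc (1+C) * (1/p - wh + 1) * (50/51)^L
              = (50/51)^L * ((1+C) * (1/p - wh + 1)) := by ring
            _ < ε := this
        linarith
      have : liminf D atTop ≤ 0 := by
        by_contra hcon
        push_neg at hcon
        have := hlimhigh (liminf D atTop / 2) (by linarith)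
        linarith
      linarith [hlimlow, this]
end
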